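/- arXiv:math/0405396 — 4 statements merged into one kernel-verified Lean document; each statement's English description precedes it below -/
import Mathlib

section
/- Every element u of the Vershik group V_n admits a Knuth–Bendix normal form: there exist k ≥ 0, indices i_1, …, i_k ∈ {1, …, n} and nonzero integers μ_1, …, μ_k such that u = x_{i_1}^{μ_1} x_{i_2}^{μ_2} ⋯ x_{i_k}^{μ_k}, the total exponent sum satisfies Σ_{j=1}^{k} |μ_j| = l(u), and for each j < k the index sequence satisfies: (i) if i_j = 1 then i_{j+1} > 1; (ii) if i_j = m with 1 < m < n then i_{j+1} = m − 1 or i_{j+1} > m; (iii) if i_j = n then i_{j+1} = n − 1. -/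
/-- Defining relations of the Vershik group `V n`: generators `x_i` and `x_j`
(0-indexed by `Fin n`) commute whenever `|i - j| ≥ 2`. -/
def VershikRels (n : ℕ) : Set (FreeGroup (Fin n)) :=
  {r | ∃ i j : Fin n, 2 ≤ |(i : ℤ) - (j : ℤ)| ∧
      r = FreeGroup.of i * FreeGroup.of j * (FreeGroup.of i)⁻¹ * (FreeGroup.of j)⁻¹}

/-- The Vershik group of rank `n`. -/
abbrev Vershik (n : ℕ) : Type := PresentedGroup (VershikRels n)

/-- The generator `x_{i+1}` of the Vershik group (0-indexed by `Fin n`). -/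
def xGen (n : ℕ) (i : Fin n) : Vershik n := PresentedGroup.of i

/-- A letter: a generator or the inverse of a generator. -/
def IsLetter (n : ℕ) (g : Vershik n) : Prop :=
  ∃ i : Fin n, g = xGen n i ∨ g = (xGen n i)⁻¹

/-- The length `l(u)`: the minimal number of letters (generators or inverses of
generators) needed to write `u` as a product. -/
noncomputable def vLength {n : ℕ} (u : Vershik n) : ℕ :=
  sInf {k | ∃ L : List (Vershik n), L.length = k ∧ (∀ g ∈ L, IsLetter n g) ∧ L.prod = u}

/-- Conditions (i)–(iii) on the (1-indexed) index sequence of an expression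
`x_{i_1}^{μ_1} ⋯ x_{i_k}^{μ_k}`, recorded as a list of pairs (index, exponent):
for consecutive 1-based generator indices `a = i_j` and `b = i_{j+1}`:
(i) if `a = 1` then `b > 1`; (ii) if `1 < a < n` then `b = a - 1` or `b > a`;
(iii) if `a = n` then `b = n - 1`. -/
def KBIndexConds (n : ℕ) (L : List (Fin n × ℤ)) : Prop :=
  ∀ j : ℕ, ∀ hj : j + 1 < L.length,
    (((L[j]'(Nat.lt_of_succ_lt hj)).1 : ℕ) + 1 = 1 → 1 < ((L[j+1]'hj).1 : ℕ) + 1) ∧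
    (1 < ((L[j]'(Nat.lt_of_succ_lt hj)).1 : ℕ) + 1 →
      ((L[j]'(Nat.lt_of_succ_lt hj)).1 : ℕ) + 1 < n →
      (((L[j+1]'hj).1 : ℕ) + 1 = ((L[j]'(Nat.lt_of_succ_lt hj)).1 : ℕ) + 1 - 1 ∨
        ((L[j]'(Nat.lt_of_succ_lt hj)).1 : ℕ) + 1 < ((L[j+1]'hj).1 : ℕ) + 1)) ∧
    (((L[j]'(Nat.lt_of_succ_lt hj)).1 : ℕ) + 1 = n → ((L[j+1]'hj).1 : ℕ) + 1 = n - 1)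

/-- `L` (a list of pairs `(i_j, μ_j)` of a generator index and a nonzero exponent)
is a Knuth–Bendix normal form of `u ∈ V_n`: `u = x_{i_1}^{μ_1} ⋯ x_{i_k}^{μ_k}`,
all `μ_j ≠ 0`, `Σ |μ_j| = l(u)`, and the index sequence satisfies (i)–(iii). -/
def IsKBNormalForm (n : ℕ) (u : Vershik n) (L : List (Fin n × ℤ)) : Prop :=
  (∀ p ∈ L, p.2 ≠ 0) ∧
  (L.map fun p => xGen n p.1 ^ p.2).prod = u ∧
  (L.map fun p => p.2.natAbs).sum = vLength u ∧
  KBIndexConds n L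

set_option linter.unreachableTactic false
set_option linter.unusedTactic false
set_option linter.unusedVariables false

namespace VKB

variable {n : ℕ}

lemma xGen_commute {i j : Fin n} (h : 2 ≤ |(i:ℤ) - (j:ℤ)|) :
    Commute (xGen n i) (xGen n j) := by
  rw [← commutatorElement_eq_one_iff_commute]
  have hr : (FreeGroup.of i * FreeGroup.of j * (FreeGroup.of i)⁻¹ * (FreeGroup.of j)⁻¹)
      ∈ VershikRels n := ⟨i, j, h, rfl⟩
  have h1 : PresentedGroup.mk (VershikRels n)
      (FreeGroup.of i * FreeGroup.of j * (FreeGroup.of i)⁻¹ * (FreeGroup.of j)⁻¹) = 1 := by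
    have : (FreeGroup.of i * FreeGroup.of j * (FreeGroup.of i)⁻¹ * (FreeGroup.of j)⁻¹)
        ∈ Subgroup.normalClosure (VershikRels n) := Subgroup.subset_normalClosure hr
    exact (QuotientGroup.eq_one_iff _).mpr this
  simpa [commutatorElement_def, xGen, PresentedGroup.of, map_mul, map_inv] using h1

lemma xGen_commute_of_lt {i j : Fin n} (h : (j:ℕ) + 1 < (i:ℕ)) :
    Commute (xGen n i) (xGen n j) := by
  apply xGen_commute
  have : (j:ℤ) + 2 ≤ (i:ℤ) := by exact_mod_cast h
  rw [abs_of_nonneg (by omega)]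
  omega


def prodOf (L : List (Fin n × ℤ)) : Vershik n := (L.map fun p => xGen n p.1 ^ p.2).prod

def wt (L : List (Fin n × ℤ)) : ℕ := (L.map fun p => p.2.natAbs).sum

/-- one leftmost rewrite step -/
def step : List (Fin n × ℤ) → List (Fin n × ℤ)
  | [] => []
  | [p] => [p]
  | (a, μ) :: (b, ν) :: L =>
    if a = b then (if μ + ν = 0 then L else (a, μ + ν) :: L)
    else if (b:ℕ) + 1 < (a:ℕ) then (b, ν) :: (a, μ) :: L
    else (a, μ) :: step ((b, ν) :: L)

def inv : List (Fin n × ℤ) → ℕ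
  | [] => 0
  | p :: L => L.countP (fun q => decide (q.1 < p.1)) + inv L

def msr (L : List (Fin n × ℤ)) : ℕ := L.length + inv L

lemma countP_step_le (P : Fin n → Bool) (L : List (Fin n × ℤ)) :
    (step L).countP (fun q => P q.1) ≤ L.countP (fun q => P q.1) := by
  induction L using step.induct with
  | case1 => simp [step]
  | case2 p => simp [step]
  | case3 μ b ν L h0 =>
    simp [step, h0, List.countP_cons]
    omega
  | case4 μ b ν L h0 =>
    simp [step, h0, List.countP_cons]
  | case5 a μ b ν L hab hswap =>
    simp only [step, if_neg hab, if_pos hswap, List.countP_cons]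
    omega
  | case6 a μ b ν L hab hswap ih =>
    simp only [step, if_neg hab, if_neg hswap, List.countP_cons]
    simp only [List.countP_cons] at ih ⊢
    omega

lemma msr_step_lt (L : List (Fin n × ℤ)) (h : step L ≠ L) : msr (step L) < msr L := by
  induction L using step.induct with
  | case1 => simp [step] at h
  | case2 p => simp [step] at h
  | case3 μ b ν L h0 =>
    simp [step, h0, msr, inv, List.countP_cons]
    omega
  | case4 μ b ν L h0 =>
    simp [step, h0, msr, inv, List.countP_cons]
    omega
  | case5 a μ b ν L hab hswap =>
    simp only [step, if_neg hab, if_pos hswap] at *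
    simp only [msr, inv, List.length_cons, List.countP_cons]
    have hba : b < a := by
      rw [Fin.lt_def]; omega
    have hnab : ¬ (a < b) := by rw [Fin.lt_def]; omega
    simp [hba, hnab]
    omega
  | case6 a μ b ν L hab hswap ih =>
    simp only [step, if_neg hab, if_neg hswap] at *
    have hne : step ((b, ν) :: L) ≠ (b, ν) :: L := by
      intro he; apply h; rw [he]
    have h1 := ih hne
    have h2 := countP_step_le (fun q => decide (q < a)) ((b, ν) :: L)
    simp only [msr, inv, List.length_cons] at *
    omega

lemma prodOf_cons (p : Fin n × ℤ) (L : List (Fin n × ℤ)) :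
    prodOf (p :: L) = xGen n p.1 ^ p.2 * prodOf L := by
  simp [prodOf]

lemma prodOf_step (L : List (Fin n × ℤ)) : prodOf (step L) = prodOf L := by
  induction L using step.induct with
  | case1 => rfl
  | case2 p => rfl
  | case3 μ b ν L h0 =>
    simp only [step, if_pos rfl, if_true, if_pos h0, prodOf_cons]
    rw [← mul_assoc, ← zpow_add, h0, zpow_zero, one_mul]
  | case4 μ b ν L h0 =>
    simp only [step, if_pos rfl, if_true, if_neg h0, prodOf_cons]
    rw [← mul_assoc, ← zpow_add]
  | case5 a μ b ν L hab hswap =>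
    simp only [step, if_neg hab, if_pos hswap, prodOf_cons]
    rw [← mul_assoc, ← mul_assoc, ((xGen_commute_of_lt hswap).zpow_zpow μ ν).eq]
  | case6 a μ b ν L hab hswap ih =>
    simp only [step, if_neg hab, if_neg hswap, prodOf_cons]
    rw [ih, prodOf_cons]

lemma wt_step_le (L : List (Fin n × ℤ)) : wt (step L) ≤ wt L := by
  induction L using step.induct with
  | case1 => exact le_refl _
  | case2 p => exact le_refl _
  | case3 μ b ν L h0 =>
    simp only [step, if_pos rfl, if_true, if_pos h0, wt, List.map_cons, List.sum_cons]
    omega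
  | case4 μ b ν L h0 =>
    simp only [step, if_pos rfl, if_true, if_neg h0, wt, List.map_cons, List.sum_cons]
    omega
  | case5 a μ b ν L hab hswap =>
    simp only [step, if_neg hab, if_pos hswap, wt, List.map_cons, List.sum_cons]
    omega
  | case6 a μ b ν L hab hswap ih =>
    simp only [step, if_neg hab, if_neg hswap, wt, List.map_cons, List.sum_cons] at *
    omega

lemma step_nonzero (L : List (Fin n × ℤ)) (h : ∀ p ∈ L, p.2 ≠ 0) :
    ∀ p ∈ step L, p.2 ≠ 0 := by
  induction L using step.induct with
  | case1 => exact h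
  | case2 p => exact h
  | case3 μ b ν L h0 =>
    simp only [step, if_pos rfl, if_true, if_pos h0]
    intro p hp; exact h p (by simp [hp])
  | case4 μ b ν L h0 =>
    simp only [step, if_pos rfl, if_true, if_neg h0]
    intro p hp
    rcases List.mem_cons.mp hp with h1 | h1
    · subst h1; exact h0
    · exact h p (by simp [h1])
  | case5 a μ b ν L hab hswap =>
    simp only [step, if_neg hab, if_pos hswap]
    intro p hp
    apply h p
    simp only [List.mem_cons] at hp ⊢
    tauto
  | case6 a μ b ν L hab hswap ih =>
    simp only [step, if_neg hab, if_neg hswap]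
    intro p hp
    rcases List.mem_cons.mp hp with h1 | h1
    · subst h1; exact h (a, μ) (by simp)
    · exact ih (fun q hq => h q (by simp [List.mem_cons.mp hq] <;> tauto)) p h1

def normalize (L : List (Fin n × ℤ)) : List (Fin n × ℤ) :=
  if h : step L = L then L else normalize (step L)
termination_by msr L
decreasing_by exact msr_step_lt L h

lemma normalize_fixpoint (L : List (Fin n × ℤ)) : step (normalize L) = normalize L := by
  induction L using normalize.induct with
  | case1 L h => rw [normalize, dif_pos h]; exact h
  | case2 L h ih => rw [normalize, dif_neg h]; exact ih

lemma normalize_prodOf (L : List (Fin n × ℤ)) : prodOf (normalize L) = prodOf L := by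
  induction L using normalize.induct with
  | case1 L h => rw [normalize, dif_pos h]
  | case2 L h ih => rw [normalize, dif_neg h, ih, prodOf_step]

lemma normalize_wt_le (L : List (Fin n × ℤ)) : wt (normalize L) ≤ wt L := by
  induction L using normalize.induct with
  | case1 L h => rw [normalize, dif_pos h]
  | case2 L h ih =>
    rw [normalize, dif_neg h]
    exact le_trans ih (wt_step_le L)

lemma normalize_nonzero (L : List (Fin n × ℤ)) (h : ∀ p ∈ L, p.2 ≠ 0) :
    ∀ p ∈ normalize L, p.2 ≠ 0 := by
  induction L using normalize.induct with
  | case1 L hs => rw [normalize, dif_pos hs]; exact h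
  | case2 L hs ih => rw [normalize, dif_neg hs]; exact ih (step_nonzero L h)

/-- the local condition at a fixpoint of `step` -/
def R (p q : Fin n × ℤ) : Prop := ((q.1:ℕ) + 1 = (p.1:ℕ)) ∨ ((p.1:ℕ) < (q.1:ℕ))

lemma chain_of_fixpoint (L : List (Fin n × ℤ)) (h : step L = L) : List.Chain' R L := by
  induction L using step.induct with
  | case1 => exact List.isChain_nil
  | case2 p => exact List.isChain_singleton p
  | case3 μ b ν L h0 =>
    exfalso
    simp only [step, if_pos rfl, if_true, if_pos h0] at h
    have := congrArg List.length h
    simp only [List.length_cons] at this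
    omega
  | case4 μ b ν L h0 =>
    exfalso
    simp only [step, if_pos rfl, if_true, if_neg h0] at h
    have := congrArg List.length h
    simp at this
  | case5 a μ b ν L hab hswap =>
    exfalso
    simp only [step, if_neg hab, if_pos hswap, List.cons.injEq, Prod.mk.injEq] at h
    exact hab h.1.1.symm
  | case6 a μ b ν L hab hswap ih =>
    simp only [step, if_neg hab, if_neg hswap, List.cons.injEq, true_and] at h
    refine List.isChain_cons_cons.mpr ⟨?_, ih h⟩
    have hne : (a:ℕ) ≠ (b:ℕ) := fun he => hab (Fin.val_injective he)
    simp only [R]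
    omega

lemma kb_of_chain {L : List (Fin n × ℤ)} (h : List.Chain' R L) : KBIndexConds n L := by
  rw [show List.Chain' R L = List.IsChain R L from rfl, List.isChain_iff_getElem] at h
  intro j hj
  have hr := h j (by omega)
  simp only [R, List.get_eq_getElem] at hr
  have ha : ((L[j]'(Nat.lt_of_succ_lt hj)).1 : ℕ) < n := (L[j]'(Nat.lt_of_succ_lt hj)).1.isLt
  have hb : ((L[j+1]'hj).1 : ℕ) < n := (L[j+1]'hj).1.isLt
  refine ⟨fun h1 => ?_, fun h1 h2 => ?_, fun h1 => ?_⟩ <;> omega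

def blockLetters (p : Fin n × ℤ) : List (Vershik n) :=
  List.replicate p.2.natAbs (if 0 ≤ p.2 then xGen n p.1 else (xGen n p.1)⁻¹)

lemma blockLetters_prod (p : Fin n × ℤ) :
    (blockLetters p).prod = xGen n p.1 ^ p.2 := by
  rcases le_or_gt 0 p.2 with h | h
  · rw [blockLetters, if_pos h, List.prod_replicate, ← zpow_natCast,
      Int.natAbs_of_nonneg h]
  · rw [blockLetters, if_neg (not_le.mpr h), List.prod_replicate, ← zpow_natCast,
      inv_zpow, ← zpow_neg]
    congr 1
    omega

lemma blockLetters_isLetter (p : Fin n × ℤ) : ∀ g ∈ blockLetters p, IsLetter n g := by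
  intro g hg
  rw [blockLetters] at hg
  have := List.eq_of_mem_replicate hg
  subst this
  exact ⟨p.1, by split <;> simp⟩

lemma vLength_le_wt (L : List (Fin n × ℤ)) : vLength (prodOf L) ≤ wt L := by
  apply Nat.sInf_le
  refine ⟨(L.map blockLetters).flatten, ?_, ?_, ?_⟩
  · rw [List.length_flatten, List.map_map]
    simp only [wt]
    congr 1
    ext p
    simp [blockLetters]
  · intro g hg
    rw [List.mem_flatten] at hg
    obtain ⟨l, hl, hgl⟩ := hg
    rw [List.mem_map] at hl
    obtain ⟨p, _, rfl⟩ := hl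
    exact blockLetters_isLetter p g hgl
  · rw [List.prod_flatten, List.map_map]
    simp only [prodOf, Function.comp]
    congr 1
    exact List.map_congr_left fun p _ => blockLetters_prod p

lemma exists_letters (u : Vershik n) :
    ∃ L : List (Vershik n), (∀ g ∈ L, IsLetter n g) ∧ L.prod = u := by
  induction u using PresentedGroup.induction_on with
  | H z =>
    induction z using FreeGroup.induction_on with
    | C1 => exact ⟨[], by simp, by simp [map_one]⟩
    | of x => exact ⟨[xGen n x], by intro g hg; simp at hg; exact ⟨x, Or.inl hg⟩, by simp [xGen, PresentedGroup.of]⟩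
    | inv_of x _ =>
      refine ⟨[(xGen n x)⁻¹], ?_, ?_⟩
      · intro g hg; simp at hg; exact ⟨x, Or.inr hg⟩
      · simp [xGen, PresentedGroup.of, map_inv]
    | mul y z hy hz =>
      obtain ⟨L1, hL1, hp1⟩ := hy
      obtain ⟨L2, hL2, hp2⟩ := hz
      refine ⟨L1 ++ L2, ?_, ?_⟩
      · intro g hg; rcases List.mem_append.mp hg with h | h
        · exact hL1 g h
        · exact hL2 g h
      · rw [List.prod_append, hp1, hp2, map_mul]

lemma letters_to_blocks (L : List (Vershik n)) (h : ∀ g ∈ L, IsLetter n g) :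
    ∃ B : List (Fin n × ℤ), (∀ p ∈ B, p.2 ≠ 0) ∧ prodOf B = L.prod ∧ wt B = L.length := by
  induction L with
  | nil => exact ⟨[], by simp, by simp [prodOf], by simp [wt]⟩
  | cons g L ih =>
    obtain ⟨B, hB0, hBp, hBw⟩ := ih (fun g' hg' => h g' (List.mem_cons_of_mem _ hg'))
    obtain ⟨i, hi | hi⟩ := h g List.mem_cons_self
    · refine ⟨(i, 1) :: B, ?_, ?_, ?_⟩
      · intro p hp; rcases List.mem_cons.mp hp with h1 | h1
        · subst h1; simp
        · exact hB0 p h1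
      · rw [prodOf_cons, hBp, List.prod_cons, hi]; norm_num
      · simp [wt] at hBw ⊢; omega
    · refine ⟨(i, -1) :: B, ?_, ?_, ?_⟩
      · intro p hp; rcases List.mem_cons.mp hp with h1 | h1
        · subst h1; simp
        · exact hB0 p h1
      · rw [prodOf_cons, hBp, List.prod_cons, hi]; norm_num
      · simp [wt] at hBw ⊢; omega

lemma vLength_eq (u : Vershik n) :
    ∃ L : List (Vershik n), L.length = vLength u ∧ (∀ g ∈ L, IsLetter n g) ∧ L.prod = u := by
  obtain ⟨L, hL, hp⟩ := exists_letters u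
  have hne : {k | ∃ L : List (Vershik n), L.length = k ∧ (∀ g ∈ L, IsLetter n g) ∧ L.prod = u}.Nonempty :=
    ⟨L.length, L, rfl, hL, hp⟩
  exact Nat.sInf_mem hne

end VKB

/-- Every element of the Vershik group `V_n` admits a Knuth–Bendix normal form. -/
theorem vershik_kb_normal_form_exists (n : ℕ) (u : Vershik n) :
    ∃ L : List (Fin n × ℤ), IsKBNormalForm n u L := by
  obtain ⟨L0, hlen, hlet, hprod⟩ := VKB.vLength_eq u
  obtain ⟨B, hB0, hBp, hBw⟩ := VKB.letters_to_blocks L0 hlet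
  refine ⟨VKB.normalize B, VKB.normalize_nonzero B hB0, ?_, ?_,
    VKB.kb_of_chain (VKB.chain_of_fixpoint _ (VKB.normalize_fixpoint B))⟩
  · show VKB.prodOf (VKB.normalize B) = u
    rw [VKB.normalize_prodOf, hBp, hprod]
  · show VKB.wt (VKB.normalize B) = vLength u
    have h1 : VKB.wt (VKB.normalize B) ≤ vLength u := by
      rw [← hlen, ← hBw]; exact VKB.normalize_wt_le B
    have h2 : vLength u ≤ VKB.wt (VKB.normalize B) := by
      have := VKB.vLength_le_wt (VKB.normalize B)
      rwa [VKB.normalize_prodOf, hBp, hprod] at this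
    omega
end

section
/- The normal form solves the word problem in the Vershik group V_n: two words in the generators x_1, …, x_n and their inverses represent the same element of V_n if and only if their Knuth–Bendix normal forms coincide, i.e., if and only if the unique length-minimal expressions x_{i_1}^{μ_1} ⋯ x_{i_k}^{μ_k} satisfying conditions (i)–(iii) associated to the two words have the same sequence of pairs (i_1, μ_1), …, (i_k, μ_k). -/
/-- The canonical projection from the free group on the generators to the
Vershik group, sending a word to the element it represents. -/
def vershikMk (n : ℕ) : FreeGroup (Fin n) →* Vershik n :=
  QuotientGroup.mk' (Subgroup.normalClosure (VershikRels n))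



namespace VWP

variable {n : ℕ}

/-- The allowed transition between consecutive blocks of a normal word. -/
def Valid (p q : Fin n × ℤ) : Prop := ((q.1 : ℕ) + 1 = (p.1 : ℕ)) ∨ ((p.1 : ℕ) < (q.1 : ℕ))

lemma valid_mk {i j : Fin n} {a b : ℤ} :
    Valid (i, a) (j, b) ↔ ((j : ℕ) + 1 = (i : ℕ) ∨ (i : ℕ) < (j : ℕ)) := Iff.rfl

/-- A normal list: nonzero exponents, valid consecutive indices. -/
def Normal (L : List (Fin n × ℤ)) : Prop := (∀ p ∈ L, p.2 ≠ 0) ∧ L.Chain' Valid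

/-- Left multiplication by `x_i^ε` on (normal) lists. -/
def leftmul (ε : ℤ) (i : Fin n) : List (Fin n × ℤ) → List (Fin n × ℤ)
  | [] => [(i, ε)]
  | (j, μ) :: T =>
    if i = j then (if μ + ε = 0 then T else (i, μ + ε) :: T)
    else if ((j : ℕ) + 1 = (i : ℕ) ∨ (i : ℕ) < (j : ℕ)) then (i, ε) :: (j, μ) :: T
    else (j, μ) :: leftmul ε i T

@[simp] lemma leftmul_nil (ε : ℤ) (i : Fin n) : leftmul ε i ([] : List (Fin n × ℤ)) = [(i, ε)] := rfl

lemma leftmul_cons (ε : ℤ) (i j : Fin n) (μ : ℤ) (T : List (Fin n × ℤ)) :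
    leftmul ε i ((j, μ) :: T) =
      if i = j then (if μ + ε = 0 then T else (i, μ + ε) :: T)
      else if ((j : ℕ) + 1 = (i : ℕ) ∨ (i : ℕ) < (j : ℕ)) then (i, ε) :: (j, μ) :: T
      else (j, μ) :: leftmul ε i T := rfl

lemma commute_cond {i j : Fin n} (hij : i ≠ j)
    (hv : ¬((j : ℕ) + 1 = (i : ℕ) ∨ (i : ℕ) < (j : ℕ))) : (j : ℕ) + 2 ≤ (i : ℕ) := by
  push_neg at hv
  rcases hv with ⟨h1, h2⟩
  have : (j : ℕ) ≠ (i : ℕ) := fun h => hij (Fin.ext h.symm)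
  omega

/-- Chain preservation together with information about the head of the result. -/
lemma chain_leftmul (ε : ℤ) (i : Fin n) :
    ∀ {L : List (Fin n × ℤ)}, L.Chain' Valid →
      (leftmul ε i L).Chain' Valid ∧
        (∀ p ∈ (leftmul ε i L).head?, ((i : ℕ) ≤ (p.1 : ℕ) + 1 ∨ ∃ q ∈ L.head?, (p.1 : ℕ) = (q.1 : ℕ)))
  | [], _ => by
      refine ⟨List.isChain_singleton _, ?_⟩
      intro p hp
      simp only [leftmul_nil, List.head?_cons, Option.mem_def, Option.some.injEq] at hp
      subst hp; left; simp
  | (j, μ) :: T, h => by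
      rw [List.Chain', List.isChain_cons] at h
      obtain ⟨hhd, hT⟩ := h
      by_cases hij : i = j
      · subst hij
        by_cases hcan : μ + ε = 0
        · rw [leftmul_cons, if_pos rfl, if_pos hcan]
          refine ⟨hT, ?_⟩
          intro p hp
          have h2 : ((p.1 : ℕ) + 1 = (i : ℕ)) ∨ ((i : ℕ) < (p.1 : ℕ)) := hhd p hp
          left; omega
        · rw [leftmul_cons, if_pos rfl, if_neg hcan]
          constructor
          · rw [List.Chain', List.isChain_cons]
            exact ⟨fun y hy => hhd y hy, hT⟩
          · intro p hp
            simp only [List.head?_cons, Option.mem_def, Option.some.injEq] at hp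
            subst hp; left; simp
      · by_cases hv : ((j : ℕ) + 1 = (i : ℕ) ∨ (i : ℕ) < (j : ℕ))
        · rw [leftmul_cons, if_neg hij, if_pos hv]
          constructor
          · rw [List.Chain', List.isChain_cons_cons]
            refine ⟨hv, ?_⟩
            rw [List.isChain_cons]
            exact ⟨hhd, hT⟩
          · intro p hp
            simp only [List.head?_cons, Option.mem_def, Option.some.injEq] at hp
            subst hp; left; simp
        · have hji : (j : ℕ) + 2 ≤ (i : ℕ) := commute_cond hij hv
          obtain ⟨hc, hh⟩ := chain_leftmul ε i hT
          rw [leftmul_cons, if_neg hij, if_neg hv]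
          constructor
          · rw [List.Chain', List.isChain_cons]
            refine ⟨?_, hc⟩
            intro y hy
            rcases hh y hy with h1 | ⟨q, hq, h2⟩
            · right; simp only [Prod.fst]; omega
            · have := hhd q hq
              unfold Valid at this ⊢
              rcases this with h3 | h3
              · left; omega
              · right; omega
          · intro p hp
            simp only [List.head?_cons, Option.mem_def, Option.some.injEq] at hp
            subst hp; right; exact ⟨(j, μ), rfl, rfl⟩

lemma exps_leftmul (ε : ℤ) (i : Fin n) (hε : ε ≠ 0) :
    ∀ {L : List (Fin n × ℤ)}, (∀ p ∈ L, p.2 ≠ 0) → (∀ p ∈ leftmul ε i L, p.2 ≠ 0)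
  | [], _ => by
      intro p hp
      simp only [leftmul_nil, List.mem_singleton] at hp
      subst hp; exact hε
  | (j, μ) :: T, h => by
      intro p hp
      by_cases hij : i = j
      · subst hij
        by_cases hcan : μ + ε = 0
        · rw [leftmul_cons, if_pos rfl, if_pos hcan] at hp
          exact h p (List.mem_cons_of_mem _ hp)
        · rw [leftmul_cons, if_pos rfl, if_neg hcan] at hp
          rcases List.mem_cons.mp hp with h1 | h1
          · subst h1; exact hcan
          · exact h p (List.mem_cons_of_mem _ h1)
      · by_cases hv : ((j : ℕ) + 1 = (i : ℕ) ∨ (i : ℕ) < (j : ℕ))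
        · rw [leftmul_cons, if_neg hij, if_pos hv] at hp
          rcases List.mem_cons.mp hp with h1 | h1
          · subst h1; exact hε
          · exact h p h1
        · rw [leftmul_cons, if_neg hij, if_neg hv] at hp
          rcases List.mem_cons.mp hp with h1 | h1
          · subst h1; exact h (j, μ) (List.mem_cons_self)
          · exact exps_leftmul ε i hε (fun q hq => h q (List.mem_cons_of_mem _ hq)) p h1

lemma normal_leftmul {ε : ℤ} {i : Fin n} (hε : ε ≠ 0) {L : List (Fin n × ℤ)}
    (h : Normal L) : Normal (leftmul ε i L) :=
  ⟨exps_leftmul ε i hε h.1, (chain_leftmul ε i h.2).1⟩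

lemma normal_tail {p : Fin n × ℤ} {T : List (Fin n × ℤ)} (h : Normal (p :: T)) : Normal T :=
  ⟨fun q hq => h.1 q (List.mem_cons_of_mem _ hq), (List.isChain_cons.mp h.2).2⟩

/-- `leftmul (-ε)` undoes `leftmul ε` on normal lists. -/
lemma leftmul_inv (ε : ℤ) (i : Fin n) :
    ∀ {L : List (Fin n × ℤ)}, Normal L → leftmul (-ε) i (leftmul ε i L) = L
  | [], _ => by
      rw [leftmul_nil, leftmul_cons, if_pos rfl, if_pos (by ring)]
  | (j, μ) :: T, h => by
      have hexp := h.1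
      have hch := h.2
      rw [List.Chain', List.isChain_cons] at hch
      obtain ⟨hhd, hT⟩ := hch
      by_cases hij : i = j
      · subst hij
        by_cases hcan : μ + ε = 0
        · rw [leftmul_cons, if_pos rfl, if_pos hcan]
          have hμ : μ = -ε := by omega
          cases T with
          | nil => rw [leftmul_nil, hμ]
          | cons q T' =>
            obtain ⟨k, ν⟩ := q
            have hvik : Valid (i, μ) (k, ν) := hhd (k, ν) rfl
            rw [valid_mk] at hvik
            have hik : i ≠ k := by
              intro hcon
              rw [hcon] at hvik; omega
            rw [leftmul_cons, if_neg hik, if_pos hvik, hμ]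
        · have hμ0 : μ ≠ 0 := hexp (i, μ) (List.mem_cons_self)
          rw [leftmul_cons, if_pos rfl, if_neg hcan, leftmul_cons, if_pos rfl,
            if_neg (by omega : ¬(μ + ε + -ε = 0))]
          have hμ : μ + ε + -ε = μ := by ring
          rw [hμ]
      · by_cases hv : ((j : ℕ) + 1 = (i : ℕ) ∨ (i : ℕ) < (j : ℕ))
        · rw [leftmul_cons, if_neg hij, if_pos hv, leftmul_cons, if_pos rfl,
            if_pos (by ring)]
        · rw [leftmul_cons, if_neg hij, if_neg hv, leftmul_cons, if_neg hij, if_neg hv,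
            leftmul_inv ε i (normal_tail h)]



/-- Commutation: `leftmul` for far-apart generators commute on normal lists. -/
lemma leftmul_comm {i j : Fin n} (hji : (j : ℕ) + 2 ≤ (i : ℕ)) (ε δ : ℤ) :
    ∀ {L : List (Fin n × ℤ)}, Normal L →
      leftmul ε i (leftmul δ j L) = leftmul δ j (leftmul ε i L)
  | [], _ => by
      have hij : i ≠ j := by intro h; rw [h] at hji; omega
      have hji' : j ≠ i := fun h => hij h.symm
      rw [leftmul_nil, leftmul_nil, leftmul_cons, leftmul_cons,
        if_neg hij, if_neg (by omega : ¬((j : ℕ) + 1 = (i : ℕ) ∨ (i : ℕ) < (j : ℕ))),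
        if_neg hji', if_pos (by omega : ((i : ℕ) + 1 = (j : ℕ) ∨ (j : ℕ) < (i : ℕ))),
        leftmul_nil]
  | (k, μ) :: T, h => by
      have hij : i ≠ j := by intro hc; rw [hc] at hji; omega
      have hji' : j ≠ i := fun hc => hij hc.symm
      have hvji : ((i : ℕ) + 1 = (j : ℕ) ∨ (j : ℕ) < (i : ℕ)) := by omega
      have hnvij : ¬((j : ℕ) + 1 = (i : ℕ) ∨ (i : ℕ) < (j : ℕ)) := by omega
      have hexp := h.1
      have hch := h.2
      rw [List.Chain', List.isChain_cons] at hch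
      obtain ⟨hhd, hT⟩ := hch
      by_cases hki : k = i
      · rw [hki] at hhd ⊢
        -- head block has index i
        have e1 : leftmul δ j ((i, μ) :: T) = (j, δ) :: (i, μ) :: T := by
          rw [leftmul_cons, if_neg hji', if_pos hvji]
        have e2 : leftmul ε i ((j, δ) :: (i, μ) :: T) =
            (j, δ) :: leftmul ε i ((i, μ) :: T) := by
          rw [leftmul_cons, if_neg hij, if_neg hnvij]
        rw [e1, e2]
        by_cases hcan : μ + ε = 0
        · have e3 : leftmul ε i ((i, μ) :: T) = T := by
            rw [leftmul_cons, if_pos rfl, if_pos hcan]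
          rw [e3]
          cases T with
          | nil => rw [leftmul_nil]
          | cons q T' =>
            obtain ⟨m, ν⟩ := q
            have hv : Valid (i, μ) (m, ν) := hhd (m, ν) rfl
            rw [valid_mk] at hv
            have hjm : j ≠ m := by intro hc; rw [hc] at hji; omega
            rw [leftmul_cons, if_neg hjm,
              if_pos (by omega : ((m : ℕ) + 1 = (j : ℕ) ∨ (j : ℕ) < (m : ℕ)))]
        · have e3 : leftmul ε i ((i, μ) :: T) = (i, μ + ε) :: T := by
            rw [leftmul_cons, if_pos rfl, if_neg hcan]
          rw [e3, leftmul_cons, if_neg hji', if_pos hvji]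
      · by_cases hkj : k = j
        · rw [hkj] at hhd ⊢
          have e1 : leftmul ε i ((j, μ) :: T) = (j, μ) :: leftmul ε i T := by
            rw [leftmul_cons, if_neg hij, if_neg hnvij]
          rw [e1]
          by_cases hcan : μ + δ = 0
          · rw [leftmul_cons δ j, if_pos rfl, if_pos hcan,
              leftmul_cons δ j, if_pos rfl, if_pos hcan]
          · rw [leftmul_cons δ j, if_pos rfl, if_neg hcan,
              leftmul_cons δ j, if_pos rfl, if_neg hcan,
              leftmul_cons ε i, if_neg hij, if_neg hnvij]
        · have hik : i ≠ k := fun hc => hki hc.symm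
          have hjk : j ≠ k := fun hc => hkj hc.symm
          by_cases hvik : ((k : ℕ) + 1 = (i : ℕ) ∨ (i : ℕ) < (k : ℕ))
          · by_cases hvjk : ((k : ℕ) + 1 = (j : ℕ) ∨ (j : ℕ) < (k : ℕ))
            · -- both prepend
              have e1 : leftmul δ j ((k, μ) :: T) = (j, δ) :: (k, μ) :: T := by
                rw [leftmul_cons, if_neg hjk, if_pos hvjk]
              have e2 : leftmul ε i ((j, δ) :: (k, μ) :: T) =
                  (j, δ) :: leftmul ε i ((k, μ) :: T) := by
                rw [leftmul_cons, if_neg hij, if_neg hnvij]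
              have e3 : leftmul ε i ((k, μ) :: T) = (i, ε) :: (k, μ) :: T := by
                rw [leftmul_cons, if_neg hik, if_pos hvik]
              have e4 : leftmul δ j ((i, ε) :: (k, μ) :: T) =
                  (j, δ) :: (i, ε) :: (k, μ) :: T := by
                rw [leftmul_cons, if_neg hji', if_pos hvji]
              rw [e1, e2, e3, e4]
            · exfalso
              have := commute_cond hjk hvjk
              omega
          · have hk2 : (k : ℕ) + 2 ≤ (i : ℕ) := commute_cond hik hvik
            have e3 : leftmul ε i ((k, μ) :: T) = (k, μ) :: leftmul ε i T := by
              rw [leftmul_cons, if_neg hik, if_neg hvik]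
            by_cases hvjk : ((k : ℕ) + 1 = (j : ℕ) ∨ (j : ℕ) < (k : ℕ))
            · -- j prepends, i commutes past k
              have e1 : leftmul δ j ((k, μ) :: T) = (j, δ) :: (k, μ) :: T := by
                rw [leftmul_cons, if_neg hjk, if_pos hvjk]
              have e2 : leftmul ε i ((j, δ) :: (k, μ) :: T) =
                  (j, δ) :: leftmul ε i ((k, μ) :: T) := by
                rw [leftmul_cons, if_neg hij, if_neg hnvij]
              have e4 : leftmul δ j ((k, μ) :: leftmul ε i T) =
                  (j, δ) :: (k, μ) :: leftmul ε i T := by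
                rw [leftmul_cons, if_neg hjk, if_pos hvjk]
              rw [e1, e2, e3, e4]
            · -- both commute past k
              have e1 : leftmul δ j ((k, μ) :: T) = (k, μ) :: leftmul δ j T := by
                rw [leftmul_cons, if_neg hjk, if_neg hvjk]
              have e2 : leftmul ε i ((k, μ) :: leftmul δ j T) =
                  (k, μ) :: leftmul ε i (leftmul δ j T) := by
                rw [leftmul_cons, if_neg hik, if_neg hvik]
              have e4 : leftmul δ j ((k, μ) :: leftmul ε i T) =
                  (k, μ) :: leftmul δ j (leftmul ε i T) := by
                rw [leftmul_cons, if_neg hjk, if_neg hvjk]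
              rw [e1, e2, e3, e4, leftmul_comm hji ε δ (normal_tail h)]

/-- Prepending a block that keeps the list normal is exactly `leftmul`. -/
lemma leftmul_prepend {i : Fin n} {μ : ℤ} {L : List (Fin n × ℤ)}
    (h : ((i, μ) :: L).Chain' Valid) : leftmul μ i L = (i, μ) :: L := by
  cases L with
  | nil => rw [leftmul_nil]
  | cons q T =>
    obtain ⟨k, ν⟩ := q
    rw [List.Chain', List.isChain_cons_cons] at h
    have hv := h.1
    rw [valid_mk] at hv
    have hik : i ≠ k := by intro hc; rw [hc] at hv; omega
    rw [leftmul_cons, if_neg hik, if_pos hv]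

/-- Merging exponents of the same generator. -/
lemma leftmul_add {i : Fin n} (ε μ : ℤ) (hε : ε ≠ 0) (hμ : μ ≠ 0) (hμε : μ + ε ≠ 0) :
    ∀ {L : List (Fin n × ℤ)}, Normal L →
      leftmul ε i (leftmul μ i L) = leftmul (μ + ε) i L
  | [], _ => by
      rw [leftmul_nil, leftmul_nil, leftmul_cons, if_pos rfl, if_neg hμε]
  | (k, ν) :: T, h => by
      have hch := h.2
      rw [List.Chain', List.isChain_cons] at hch
      obtain ⟨hhd, hT⟩ := hch
      by_cases hik : i = k
      · rw [← hik] at hhd ⊢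
        by_cases hcan : ν + μ = 0
        · have e1 : leftmul μ i ((i, ν) :: T) = T := by
            rw [leftmul_cons, if_pos rfl, if_pos hcan]
          have e2 : leftmul (μ + ε) i ((i, ν) :: T) = (i, ε) :: T := by
            rw [leftmul_cons, if_pos rfl, if_neg (by omega : ¬(ν + (μ + ε) = 0)),
              (by omega : ν + (μ + ε) = ε)]
          rw [e1, e2]
          cases T with
          | nil => rw [leftmul_nil]
          | cons q T' =>
            obtain ⟨m, ν'⟩ := q
            have hv : Valid (i, ν) (m, ν') := hhd (m, ν') rfl
            rw [valid_mk] at hv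
            have him : i ≠ m := by intro hc; rw [hc] at hv; omega
            rw [leftmul_cons, if_neg him, if_pos hv]
        · have e1 : leftmul μ i ((i, ν) :: T) = (i, ν + μ) :: T := by
            rw [leftmul_cons, if_pos rfl, if_neg hcan]
          rw [e1, leftmul_cons, if_pos rfl, leftmul_cons, if_pos rfl]
          by_cases hcan2 : ν + μ + ε = 0
          · rw [if_pos hcan2, if_pos (by omega : ν + (μ + ε) = 0)]
          · rw [if_neg hcan2, if_neg (by omega : ¬(ν + (μ + ε) = 0)),
              (by ring : ν + μ + ε = ν + (μ + ε))]
      · by_cases hv : ((k : ℕ) + 1 = (i : ℕ) ∨ (i : ℕ) < (k : ℕ))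
        · have e1 : leftmul μ i ((k, ν) :: T) = (i, μ) :: (k, ν) :: T := by
            rw [leftmul_cons, if_neg hik, if_pos hv]
          rw [e1, leftmul_cons, if_pos rfl, if_neg hμε,
            leftmul_cons, if_neg hik, if_pos hv]
        · have e1 : leftmul μ i ((k, ν) :: T) = (k, ν) :: leftmul μ i T := by
            rw [leftmul_cons, if_neg hik, if_neg hv]
          have e2 : leftmul ε i ((k, ν) :: leftmul μ i T) =
              (k, ν) :: leftmul ε i (leftmul μ i T) := by
            rw [leftmul_cons, if_neg hik, if_neg hv]
          rw [e1, e2, leftmul_cons, if_neg hik, if_neg hv,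
            leftmul_add ε μ hε hμ hμε (normal_tail h)]

/-- The type of normal lists. -/
def NormList (n : ℕ) : Type := {L : List (Fin n × ℤ) // Normal L}

lemma normal_nil : Normal ([] : List (Fin n × ℤ)) := ⟨by simp, List.isChain_nil⟩

/-- The permutation of normal lists induced by left multiplication by `x_i`. -/
def perm (i : Fin n) : Equiv.Perm (NormList n) where
  toFun L := ⟨leftmul 1 i L.1, normal_leftmul one_ne_zero L.2⟩
  invFun L := ⟨leftmul (-1) i L.1, normal_leftmul (by norm_num) L.2⟩
  left_inv L := Subtype.ext (leftmul_inv 1 i L.2)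
  right_inv L := Subtype.ext (by
    have := leftmul_inv (-1) i L.2
    rwa [neg_neg] at this)

lemma perm_mul_comm {i j : Fin n} (h : 2 ≤ |(i : ℤ) - (j : ℤ)|) :
    perm i * perm j = perm j * perm i := by
  have hi := i.is_lt
  have hj := j.is_lt
  have hcases : ((j : ℕ) + 2 ≤ (i : ℕ)) ∨ ((i : ℕ) + 2 ≤ (j : ℕ)) := by
    rcases abs_cases ((i : ℤ) - (j : ℤ)) with ⟨h1, _⟩ | ⟨h1, _⟩ <;> rw [h1] at h <;> omega
  refine Equiv.ext fun L => ?_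
  rw [Equiv.Perm.mul_apply, Equiv.Perm.mul_apply]
  rcases hcases with hc | hc
  · exact Subtype.ext (leftmul_comm hc 1 1 L.2)
  · exact Subtype.ext (leftmul_comm hc 1 1 L.2).symm

/-- The homomorphism from the Vershik group to permutations of normal lists. -/
def toPerm : Vershik n →* Equiv.Perm (NormList n) :=
  PresentedGroup.toGroup (f := fun i => perm i) (by
    rintro r ⟨i, j, hij, rfl⟩
    simp only [map_mul, map_inv, FreeGroup.lift_apply_of]
    rw [show perm i * perm j * (perm i)⁻¹ * (perm j)⁻¹ =
      (perm i * perm j) * (perm j * perm i)⁻¹ by group, perm_mul_comm hij, mul_inv_cancel])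

lemma toPerm_of (i : Fin n) : toPerm (xGen n i) = perm i :=
  PresentedGroup.toGroup.of _

lemma toPerm_apply_of (i : Fin n) (L : NormList n) :
    ((toPerm (xGen n i)) L).1 = leftmul 1 i L.1 := by
  rw [toPerm_of]; rfl

lemma toPerm_apply_of_inv (i : Fin n) (L : NormList n) :
    ((toPerm ((xGen n i)⁻¹)) L).1 = leftmul (-1) i L.1 := by
  rw [map_inv, toPerm_of]; rfl

lemma toPerm_pow_nat (i : Fin n) (k : ℕ) (L : NormList n) :
    ((toPerm (xGen n i ^ (((k : ℤ)) + 1))) L).1 = leftmul ((k : ℤ) + 1) i L.1 := by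
  induction k with
  | zero =>
    norm_num
    exact toPerm_apply_of i L
  | succ k ih =>
    have hsplit : xGen n i ^ (((k : ℤ) + 1) + 1) =
        xGen n i * xGen n i ^ ((k : ℤ) + 1) := by
      rw [show ((k : ℤ) + 1 + 1) = 1 + ((k : ℤ) + 1) by ring, zpow_add, zpow_one]
    push_cast
    rw [hsplit, map_mul, Equiv.Perm.mul_apply, toPerm_apply_of, ih,
      leftmul_add 1 ((k : ℤ) + 1) one_ne_zero (by omega) (by omega) L.2]

lemma toPerm_pow_neg_nat (i : Fin n) (k : ℕ) (L : NormList n) :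
    ((toPerm (xGen n i ^ (-((k : ℤ)) - 1))) L).1 = leftmul (-(k : ℤ) - 1) i L.1 := by
  induction k with
  | zero =>
    have h0 : (-((0 : ℕ) : ℤ) - 1) = -1 := by norm_num
    rw [h0, zpow_neg_one, map_inv, toPerm_of]
    rfl
  | succ k ih =>
    have hsplit : xGen n i ^ (-(((k : ℕ) + 1 : ℕ) : ℤ) - 1) =
        (xGen n i)⁻¹ * xGen n i ^ (-(k : ℤ) - 1) := by
      rw [show (-(((k : ℕ) + 1 : ℕ) : ℤ) - 1) = (-1) + (-(k : ℤ) - 1) by push_cast; ring,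
        zpow_add, zpow_neg_one]
    rw [hsplit, map_mul, Equiv.Perm.mul_apply, toPerm_apply_of_inv, ih,
      leftmul_add (-1) (-(k : ℤ) - 1) (by norm_num) (by omega) (by omega) L.2,
      show (-(k : ℤ) - 1 + -1) = -(((k : ℕ) + 1 : ℕ) : ℤ) - 1 by push_cast; ring]

lemma toPerm_zpow (i : Fin n) (μ : ℤ) (hμ : μ ≠ 0) (L : NormList n) :
    ((toPerm (xGen n i ^ μ)) L).1 = leftmul μ i L.1 := by
  rcases μ with m | m
  · cases m with
    | zero => exact absurd rfl hμ
    | succ m =>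
      have : (Int.ofNat (m + 1)) = ((m : ℤ) + 1) := by
        rw [Int.ofNat_eq_coe]; push_cast; ring
      rw [this]
      exact toPerm_pow_nat i m L
  · have : (Int.negSucc m) = (-(m : ℤ) - 1) := by
      rw [Int.negSucc_eq]; ring
    rw [this]
    exact toPerm_pow_neg_nat i m L

lemma toPerm_normal : ∀ {L : List (Fin n × ℤ)}, Normal L →
    ((toPerm ((L.map fun p => xGen n p.1 ^ p.2).prod)) ⟨[], normal_nil⟩).1 = L
  | [], _ => by simp; rfl
  | (i, μ) :: T, h => by
    have hT := toPerm_normal (normal_tail h)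
    have hTel : (toPerm ((T.map fun p => xGen n p.1 ^ p.2).prod)) ⟨[], normal_nil⟩ =
        ⟨T, normal_tail h⟩ := Subtype.ext hT
    rw [List.map_cons, List.prod_cons, map_mul]
    show ((toPerm _) ((toPerm _) (⟨[], normal_nil⟩ : NormList n))).1 = _
    rw [hTel]
    exact (toPerm_zpow i μ (h.1 (i, μ) (List.mem_cons_self)) ⟨T, normal_tail h⟩).trans
      (leftmul_prepend h.2)

lemma cond_iff (i j : Fin n) :
    (((i : ℕ) + 1 = 1 → 1 < (j : ℕ) + 1) ∧
      (1 < (i : ℕ) + 1 → (i : ℕ) + 1 < n →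
        ((j : ℕ) + 1 = (i : ℕ) + 1 - 1 ∨ (i : ℕ) + 1 < (j : ℕ) + 1)) ∧
      ((i : ℕ) + 1 = n → (j : ℕ) + 1 = n - 1)) ↔
    ((j : ℕ) + 1 = (i : ℕ) ∨ (i : ℕ) < (j : ℕ)) := by
  have hi := i.is_lt
  have hj := j.is_lt
  omega

lemma kb_iff_chain {L : List (Fin n × ℤ)} : KBIndexConds n L ↔ L.Chain' Valid := by
  rw [List.Chain', List.isChain_iff_getElem]
  constructor
  · intro h m hm
    have hj : m + 1 < L.length := by omega
    have h2 := h m hj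
    exact (valid_mk.trans Iff.rfl).mpr ((cond_iff _ _).mp h2)
  · intro h m hm
    have h2 := h m (by omega)
    exact (cond_iff _ _).mpr h2

end VWP

/-- The normal form solves the word problem in the Vershik group `V_n`: two words
in the generators and their inverses represent the same element of `V_n` if and
only if their Knuth–Bendix normal forms coincide. -/
theorem vershik_word_problem (n : ℕ) (w₁ w₂ : FreeGroup (Fin n))
    (L₁ L₂ : List (Fin n × ℤ))
    (hL₁ : IsKBNormalForm n (vershikMk n w₁) L₁)
    (hL₂ : IsKBNormalForm n (vershikMk n w₂) L₂) :
    vershikMk n w₁ = vershikMk n w₂ ↔ L₁ = L₂ := by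
  constructor
  · intro h
    have hN₁ : VWP.Normal L₁ := ⟨hL₁.1, VWP.kb_iff_chain.mp hL₁.2.2.2⟩
    have hN₂ : VWP.Normal L₂ := ⟨hL₂.1, VWP.kb_iff_chain.mp hL₂.2.2.2⟩
    have e₁ : ((VWP.toPerm (vershikMk n w₁)) ⟨[], VWP.normal_nil⟩).1 = L₁ := by
      rw [← hL₁.2.1]
      exact VWP.toPerm_normal hN₁
    have e₂ : ((VWP.toPerm (vershikMk n w₂)) ⟨[], VWP.normal_nil⟩).1 = L₂ := by
      rw [← hL₂.2.1]
      exact VWP.toPerm_normal hN₂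
    rw [← e₁, ← e₂, h]
  · intro h
    rw [← hL₁.2.1, ← hL₂.2.1, h]
end

section
/- Parabolic subgroups of Vershik groups are naturally isomorphic to the corresponding presented groups: for any subset Y ⊆ {1, …, n}, let V(Y) be the group presented by generators {y_i : i ∈ Y} and relations y_i y_j = y_j y_i for all i, j ∈ Y with |i − j| ≥ 2. Then the homomorphism V(Y) → V_n sending y_i to x_i is injective; in particular, V(Y) is isomorphic to the subgroup of V_n generated by {x_i : i ∈ Y}. -/
/-- Defining relations of the presented group `V(Y)` for a subset `Y` of the
generator indices of `V_n`: the generators `y_i, y_j` (for `i, j ∈ Y`) commute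
whenever `|i - j| ≥ 2`. -/
def VershikSubRels (n : ℕ) (Y : Set (Fin n)) : Set (FreeGroup Y) :=
  {r | ∃ i j : Y, 2 ≤ |((i : Fin n) : ℤ) - ((j : Fin n) : ℤ)| ∧
      r = FreeGroup.of i * FreeGroup.of j * (FreeGroup.of i)⁻¹ * (FreeGroup.of j)⁻¹}

/-- Parabolic subgroups of Vershik groups are naturally isomorphic to the
corresponding presented groups: the homomorphism `V(Y) → V_n` sending `y_i` to
`x_i` is injective, and its range is the parabolic subgroup of `V_n` generated
by `{x_i : i ∈ Y}`. -/
theorem vershik_parabolic_presentation (n : ℕ) (Y : Set (Fin n))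
    (f : PresentedGroup (VershikSubRels n Y) →* Vershik n)
    (hf : ∀ i : Y, f (PresentedGroup.of i) = xGen n i) :
    Function.Injective f ∧
      f.range = Subgroup.closure {g : Vershik n | ∃ i ∈ Y, g = xGen n i} := by
  classical
  -- retraction
  set φ : Fin n → PresentedGroup (VershikSubRels n Y) :=
    fun i => if h : i ∈ Y then PresentedGroup.of (⟨i, h⟩ : Y) else 1 with hφ
  have hrel : ∀ r ∈ VershikRels n, FreeGroup.lift φ r = 1 := by
    rintro r ⟨i, j, hij, rfl⟩
    simp only [map_mul, map_inv, FreeGroup.lift_apply_of]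
    by_cases hi : i ∈ Y
    · by_cases hj : j ∈ Y
      · simp only [hφ, dif_pos hi, dif_pos hj]
        have : (FreeGroup.of (⟨i, hi⟩ : Y) * FreeGroup.of (⟨j, hj⟩ : Y) *
            (FreeGroup.of (⟨i, hi⟩ : Y))⁻¹ * (FreeGroup.of (⟨j, hj⟩ : Y))⁻¹)
            ∈ VershikSubRels n Y := ⟨⟨i, hi⟩, ⟨j, hj⟩, hij, rfl⟩
        have h1 := QuotientGroup.eq_one_iff
          (G := FreeGroup Y) (N := Subgroup.normalClosure (VershikSubRels n Y))
          (FreeGroup.of (⟨i, hi⟩ : Y) * FreeGroup.of (⟨j, hj⟩ : Y) *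
            (FreeGroup.of (⟨i, hi⟩ : Y))⁻¹ * (FreeGroup.of (⟨j, hj⟩ : Y))⁻¹)
        have := h1.mpr (Subgroup.subset_normalClosure this)
        exact this
      · simp [hφ, dif_pos hi, dif_neg hj]
    · simp [hφ, dif_neg hi]
  set r : Vershik n →* PresentedGroup (VershikSubRels n Y) :=
    PresentedGroup.toGroup hrel with hr
  have hretr : r.comp f = MonoidHom.id _ := by
    apply PresentedGroup.ext
    intro x
    simp only [MonoidHom.comp_apply, MonoidHom.id_apply, hf x]
    show r (xGen n x) = _
    rw [hr]
    have : xGen n (x : Fin n) = PresentedGroup.of (x : Fin n) := rfl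
    rw [this, PresentedGroup.toGroup.of]
    simp [hφ, dif_pos x.2]
  constructor
  · intro a b hab
    have ha := congrArg (fun g => g a) hretr
    have hb := congrArg (fun g => g b) hretr
    simp only [MonoidHom.comp_apply, MonoidHom.id_apply] at ha hb
    rw [← ha, ← hb, hab]
  · have : f.range = Subgroup.map f ⊤ := (MonoidHom.range_eq_map f)
    rw [this, ← PresentedGroup.closure_range_of (VershikSubRels n Y),
      MonoidHom.map_closure]
    congr 1
    ext g
    constructor
    · rintro ⟨_, ⟨i, rfl⟩, rfl⟩
      exact ⟨i, i.2, hf i⟩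
    · rintro ⟨i, hi, rfl⟩
      exact ⟨_, ⟨⟨i, hi⟩, rfl⟩, hf ⟨i, hi⟩⟩
end

section
/- Pseudo-reduction preserves length: let w = (g_1, …, g_N) be any finite word in the generators x_1, …, x_n of the Vershik group V_n and their inverses, and let u ∈ V_n be the element represented by w. Then there exists a subword of w (a sublist obtained by deleting some of the letters g_j, preserving the order of the remaining letters) that also represents u in V_n and whose number of letters equals l(u). -/
/-- The letter (generator `x_i` if `b = true`, its inverse if `b = false`)
corresponding to the pair `(i, b)`. -/
def letterOf (n : ℕ) (p : Fin n × Bool) : Vershik n :=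
  if p.2 then xGen n p.1 else (xGen n p.1)⁻¹

namespace VPR

variable {n : ℕ}

/-- formal inverse of a letter -/
def pinv (a : Fin n × Bool) : Fin n × Bool := (a.1, !a.2)

@[simp] lemma pinv_pinv (a : Fin n × Bool) : pinv (pinv a) = a := by
  simp [pinv]

@[simp] lemma pinv_fst (a : Fin n × Bool) : (pinv a).1 = a.1 := rfl

/-- the commutation relation on letters -/
def cm (a b : Fin n × Bool) : Prop := 2 ≤ |((a.1 : ℤ)) - ((b.1 : ℤ))|

instance (a b : Fin n × Bool) : Decidable (cm a b) :=
  inferInstanceAs (Decidable (2 ≤ _))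

lemma cm_symm {a b : Fin n × Bool} (h : cm a b) : cm b a := by
  unfold cm at *; rwa [abs_sub_comm]

@[simp] lemma cm_pinv_left {a b : Fin n × Bool} : cm (pinv a) b ↔ cm a b := Iff.rfl

@[simp] lemma cm_pinv_right {a b : Fin n × Bool} : cm a (pinv b) ↔ cm a b := Iff.rfl

lemma not_cm_self (a : Fin n × Bool) : ¬ cm a a := by
  unfold cm; simp

lemma not_cm_pinv (a : Fin n × Bool) : ¬ cm a (pinv a) := by
  unfold cm; simp

lemma cm_fst_ne {a b : Fin n × Bool} (h : cm a b) : a.1 ≠ b.1 := by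
  intro he
  unfold cm at h
  rw [he] at h
  simp at h

lemma ne_pinv_of_cm {a b : Fin n × Bool} (h : cm a b) : b ≠ pinv a := by
  intro he
  exact cm_fst_ne h (by rw [he]; rfl)

lemma pinv_inj {a b : Fin n × Bool} (h : pinv a = pinv b) : a = b := by
  rw [← pinv_pinv a, h, pinv_pinv]


/-! ### splitting lemmas -/

lemma append_cons_eq_append_cons {γ : Type*} :
    ∀ {P : List γ} {S q t : List γ} {a x : γ}, P ++ a :: S = q ++ x :: t →
      (∃ q₂, P = q ++ x :: q₂ ∧ t = q₂ ++ a :: S) ∨ (q = P ∧ x = a ∧ t = S) ∨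
        (∃ t₁, q = P ++ a :: t₁ ∧ S = t₁ ++ x :: t) := by
  intro P
  induction P with
  | nil =>
    intro S q t a x h
    cases q with
    | nil => simp_all
    | cons y q' =>
      simp only [List.nil_append, List.cons_append, List.cons.injEq] at h
      exact Or.inr (Or.inr ⟨q', by simp [h.1], h.2⟩)
  | cons z P' ih =>
    intro S q t a x h
    cases q with
    | nil =>
      simp only [List.cons_append, List.nil_append, List.cons.injEq] at h
      exact Or.inl ⟨P', by simp [h.1], h.2.symm⟩
    | cons y q' =>
      simp only [List.cons_append, List.cons.injEq] at h
      rcases ih h.2 with ⟨q₂, h1, h2⟩ | ⟨h1, h2, h3⟩ | ⟨t₁, h1, h2⟩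
      · exact Or.inl ⟨q₂, by simp [h.1, h1], h2⟩
      · exact Or.inr (Or.inl ⟨by simp [h.1, h1], h2, h3⟩)
      · exact Or.inr (Or.inr ⟨t₁, by simp [h.1, h1], h2⟩)

lemma append_eq_append_cons {γ : Type*} :
    ∀ {P : List γ} {S q t : List γ} {x : γ}, P ++ S = q ++ x :: t →
      (∃ q₂, P = q ++ x :: q₂ ∧ t = q₂ ++ S) ∨ (∃ t₁, q = P ++ t₁ ∧ S = t₁ ++ x :: t) := by
  intro P
  induction P with
  | nil =>
    intro S q t x h
    exact Or.inr ⟨q, by simp, by simpa using h⟩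
  | cons z P' ih =>
    intro S q t x h
    cases q with
    | nil =>
      simp only [List.cons_append, List.nil_append, List.cons.injEq] at h
      exact Or.inl ⟨P', by simp [h.1], h.2.symm⟩
    | cons y q' =>
      simp only [List.cons_append, List.cons.injEq] at h
      rcases ih h.2 with ⟨q₂, h1, h2⟩ | ⟨t₁, h1, h2⟩
      · exact Or.inl ⟨q₂, by simp [h.1, h1], h2⟩
      · exact Or.inr ⟨t₁, by simp [h.1, h1], h2⟩

/-! ### pairs, reducedness, shuffles -/

/-- `w` contains an inverse of `a` reachable through commuting letters. -/
def HasPair (a : Fin n × Bool) (w : List (Fin n × Bool)) : Prop :=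
  ∃ p s, w = p ++ pinv a :: s ∧ ∀ y ∈ p, cm a y

/-- no cancellable pair -/
def Reduced (w : List (Fin n × Bool)) : Prop :=
  ∀ p a s, w = p ++ a :: s → ¬ HasPair a s

lemma reduced_nil : Reduced (n := n) [] := by
  intro p a s h
  simp at h

lemma reduced_cons {x : Fin n × Bool} {w : List (Fin n × Bool)}
    (h : Reduced (x :: w)) : Reduced w := by
  intro p a s hw
  exact h (x :: p) a s (by simp [hw])

/-- one shuffle (swap of adjacent commuting letters) -/
def Swap (w v : List (Fin n × Bool)) : Prop :=
  ∃ p b c s, cm b c ∧ w = p ++ b :: c :: s ∧ v = p ++ c :: b :: s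

lemma Swap.symm {w v : List (Fin n × Bool)} (h : Swap w v) : Swap v w := by
  obtain ⟨p, b, c, s, h1, h2, h3⟩ := h
  exact ⟨p, c, b, s, cm_symm h1, h3, h2⟩

/-- shuffle equivalence -/
def Ee : List (Fin n × Bool) → List (Fin n × Bool) → Prop := Relation.ReflTransGen Swap

lemma Ee.refl (w : List (Fin n × Bool)) : Ee w w := Relation.ReflTransGen.refl

lemma Ee.trans {w v t : List (Fin n × Bool)} (h : Ee w v) (h' : Ee v t) : Ee w t :=
  Relation.ReflTransGen.trans h h'

lemma Ee.symm {w v : List (Fin n × Bool)} (h : Ee w v) : Ee v w :=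
  haveI : Std.Symm (Swap (n := n)) := ⟨fun _ _ hh => hh.symm⟩
  Std.Symm.symm (r := Relation.ReflTransGen Swap) _ _ h

lemma Ee.single {w v : List (Fin n × Bool)} (h : Swap w v) : Ee w v :=
  Relation.ReflTransGen.single h

lemma Swap.length {w v : List (Fin n × Bool)} (h : Swap w v) : w.length = v.length := by
  obtain ⟨p, b, c, s, _, h2, h3⟩ := h
  simp [h2, h3]

lemma Ee.length {w v : List (Fin n × Bool)} (h : Ee w v) : w.length = v.length := by
  induction h with
  | refl => rfl
  | tail _ h2 ih => exact ih.trans h2.length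

lemma Swap.append_left {w v : List (Fin n × Bool)} (u : List (Fin n × Bool)) (h : Swap w v) :
    Swap (u ++ w) (u ++ v) := by
  obtain ⟨p, b, c, s, h1, h2, h3⟩ := h
  exact ⟨u ++ p, b, c, s, h1, by simp [h2], by simp [h3]⟩

lemma Ee.append_left {w v : List (Fin n × Bool)} (u : List (Fin n × Bool)) (h : Ee w v) :
    Ee (u ++ w) (u ++ v) := by
  induction h with
  | refl => exact Ee.refl _
  | tail _ h2 ih => exact ih.trans (Ee.single (h2.append_left u))

lemma Ee.cons {w v : List (Fin n × Bool)} (x : Fin n × Bool) (h : Ee w v) :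
    Ee (x :: w) (x :: v) := h.append_left [x]

/-- moving a letter left across a block of commuting letters -/
lemma ee_move (a : Fin n × Bool) (p t : List (Fin n × Bool)) (h : ∀ y ∈ p, cm a y) :
    Ee (p ++ a :: t) (a :: (p ++ t)) := by
  induction p with
  | nil => exact Ee.refl _
  | cons y p' ih =>
    have h1 : Ee (y :: (p' ++ a :: t)) (y :: a :: (p' ++ t)) :=
      Ee.cons y (ih (fun z hz => h z (by simp [hz])))
    have h2 : Swap (y :: a :: (p' ++ t)) (a :: y :: (p' ++ t)) :=
      ⟨[], y, a, p' ++ t, cm_symm (h y (by simp)), rfl, rfl⟩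
    exact (h1.trans (Ee.single h2))

lemma hasPair_swap {a : Fin n × Bool} {w v : List (Fin n × Bool)}
    (hs : Swap w v) (h : HasPair a w) : HasPair a v := by
  obtain ⟨p, b, c, s, hbc, hw, hv⟩ := hs
  obtain ⟨q, r, hq, hcm⟩ := h
  rw [hw] at hq
  rcases append_cons_eq_append_cons hq with ⟨q₂, h1, h2⟩ | ⟨h1, h2, h3⟩ | ⟨t₁, h1, h2⟩
  · -- pinv a strictly inside p
    exact ⟨q, q₂ ++ c :: b :: s, by rw [hv, h1]; simp, hcm⟩
  · -- pinv a = b, q = p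
    subst h1
    refine ⟨q ++ [c], s, by rw [hv, ← h2]; simp, ?_⟩
    intro y hy
    rcases List.mem_append.1 hy with hy | hy
    · exact hcm y hy
    · simp only [List.mem_singleton] at hy
      subst hy
      exact cm_pinv_left.mp (h2 ▸ hbc)
  · cases t₁ with
    | nil =>
      -- pinv a = c
      simp only [List.nil_append, List.cons.injEq] at h2
      refine ⟨p, b :: s, by rw [hv, h2.1, h2.2], fun y hy => hcm y (by rw [h1]; simp [hy])⟩
    | cons c' t₁' =>
      simp only [List.cons_append, List.cons.injEq] at h2
      obtain ⟨hcc, hss⟩ := h2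
      subst hcc
      refine ⟨p ++ c :: b :: t₁', r, by rw [hv, hss]; simp, ?_⟩
      intro y hy
      apply hcm
      rw [h1]
      simp only [List.mem_append, List.mem_cons] at hy ⊢
      tauto

lemma hasPair_ee {a : Fin n × Bool} {w v : List (Fin n × Bool)}
    (hs : Ee w v) (h : HasPair a w) : HasPair a v := by
  induction hs with
  | refl => exact h
  | tail _ h2 ih => exact hasPair_swap h2 ih


/-! ### the normal-form push -/

def push (a : Fin n × Bool) : List (Fin n × Bool) → List (Fin n × Bool)
  | [] => [a]
  | b :: t => if b = pinv a then t else if cm a b then b :: push a t else a :: b :: t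

lemma push_cancel (a : Fin n × Bool) :
    ∀ (p s : List (Fin n × Bool)), (∀ y ∈ p, cm a y) → push a (p ++ pinv a :: s) = p ++ s := by
  intro p
  induction p with
  | nil => intro s _; simp [push]
  | cons y p' ih =>
    intro s h
    have hy : cm a y := h y (by simp)
    have hyne : y ≠ pinv a := fun he => not_cm_pinv a (he ▸ hy)
    simp only [List.cons_append, push, if_neg hyne, if_pos hy, List.append_eq]
    rw [ih s (fun z hz => h z (by simp [hz]))]

lemma push_no {a : Fin n × Bool} :
    ∀ {w : List (Fin n × Bool)}, ¬ HasPair a w →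
      ∃ p s, w = p ++ s ∧ (∀ y ∈ p, cm a y) ∧ push a w = p ++ a :: s := by
  intro w
  induction w with
  | nil => intro _; exact ⟨[], [], rfl, by simp, rfl⟩
  | cons b t ih =>
    intro h
    by_cases hb : b = pinv a
    · exact absurd ⟨[], t, by rw [hb]; rfl, by simp⟩ h
    by_cases hcm : cm a b
    · have ht : ¬ HasPair a t := by
        intro ⟨p, s, h1, h2⟩
        exact h ⟨b :: p, s, by rw [h1]; rfl, by
          intro y hy
          rcases List.mem_cons.1 hy with hy | hy
          · exact hy ▸ hcm
          · exact h2 y hy⟩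
      obtain ⟨p, s, h1, h2, h3⟩ := ih ht
      exact ⟨b :: p, s, by rw [h1]; rfl, by
        intro y hy
        rcases List.mem_cons.1 hy with hy | hy
        · exact hy ▸ hcm
        · exact h2 y hy, by simp [push, hb, hcm, h3]⟩
    · exact ⟨[], b :: t, rfl, by simp, by simp [push, hb, hcm]⟩

lemma split_unique {a : Fin n × Bool} :
    ∀ {p₁ s₁ p₂ s₂ : List (Fin n × Bool)},
      p₁ ++ pinv a :: s₁ = p₂ ++ pinv a :: s₂ → (∀ y ∈ p₁, cm a y) → (∀ y ∈ p₂, cm a y) →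
        p₁ = p₂ ∧ s₁ = s₂ := by
  intro p₁
  induction p₁ with
  | nil =>
    intro s₁ p₂ s₂ h h1 h2
    cases p₂ with
    | nil => simpa using h
    | cons y p₂' =>
      simp only [List.nil_append, List.cons_append, List.cons.injEq] at h
      exact absurd (h.1 ▸ h2 y (by simp)) (not_cm_pinv a)
  | cons x p₁' ih =>
    intro s₁ p₂ s₂ h h1 h2
    cases p₂ with
    | nil =>
      simp only [List.cons_append, List.nil_append, List.cons.injEq] at h
      exact absurd (h.1 ▸ h1 x (by simp)) (not_cm_pinv a)
    | cons y p₂' =>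
      simp only [List.cons_append, List.cons.injEq] at h
      obtain ⟨he, h'⟩ := h
      subst he
      obtain ⟨e1, e2⟩ := ih h' (fun z hz => h1 z (by simp [hz])) (fun z hz => h2 z (by simp [hz]))
      exact ⟨by rw [e1], e2⟩

lemma push_of_hasPair {a : Fin n × Bool} {w : List (Fin n × Bool)} (h : HasPair a w) :
    ∃ p s, w = p ++ pinv a :: s ∧ (∀ y ∈ p, cm a y) ∧ push a w = p ++ s := by
  obtain ⟨p, s, h1, h2⟩ := h
  exact ⟨p, s, h1, h2, by rw [h1, push_cancel a p s h2]⟩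

lemma push_length (a : Fin n × Bool) (w : List (Fin n × Bool)) :
    (push a w).length ≤ w.length + 1 := by
  induction w with
  | nil => simp [push]
  | cons b t ih =>
    by_cases hb : b = pinv a
    · simp [push, hb]; omega
    by_cases hcm : cm a b
    · simp only [push, if_neg hb, if_pos hcm, List.length_cons]
      omega
    · simp [push, hb, hcm]

def nf (w : List (Fin n × Bool)) : List (Fin n × Bool) := List.foldr push [] w

lemma nf_length_le (w : List (Fin n × Bool)) : (nf w).length ≤ w.length := by
  induction w with
  | nil => simp [nf]
  | cons a t ih =>
    have := push_length a (nf t)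
    simp only [nf, List.foldr_cons, List.length_cons] at *
    omega


/-! ### the word rewriting relation and quotient group -/

inductive Rel : List (Fin n × Bool) → List (Fin n × Bool) → Prop
  | refl (w) : Rel w w
  | symm {w v} : Rel w v → Rel v w
  | trans {w v t} : Rel w v → Rel v t → Rel w t
  | swap (p b c s) : cm b c → Rel (p ++ b :: c :: s) (p ++ c :: b :: s)
  | cancel (p a s) : Rel (p ++ a :: pinv a :: s) (p ++ s)

lemma Rel.append_left {w v : List (Fin n × Bool)} (u : List (Fin n × Bool)) (h : Rel w v) :
    Rel (u ++ w) (u ++ v) := by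
  induction h with
  | refl w => exact Rel.refl _
  | symm _ ih => exact ih.symm
  | trans _ _ ih1 ih2 => exact ih1.trans ih2
  | swap p b c s hc =>
    rw [← List.append_assoc, ← List.append_assoc]
    exact Rel.swap (u ++ p) b c s hc
  | cancel p a s =>
    rw [← List.append_assoc, ← List.append_assoc]
    exact Rel.cancel (u ++ p) a s

lemma Rel.append_right {w v : List (Fin n × Bool)} (u : List (Fin n × Bool)) (h : Rel w v) :
    Rel (w ++ u) (v ++ u) := by
  induction h with
  | refl w => exact Rel.refl _
  | symm _ ih => exact ih.symm
  | trans _ _ ih1 ih2 => exact ih1.trans ih2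
  | swap p b c s hc =>
    rw [List.append_assoc, List.append_assoc]
    simpa using Rel.swap p b c (s ++ u) hc
  | cancel p a s =>
    rw [List.append_assoc, List.append_assoc]
    simpa using Rel.cancel p a (s ++ u)

lemma Rel.of_swap {w v : List (Fin n × Bool)} (h : Swap w v) : Rel w v := by
  obtain ⟨p, b, c, s, h1, h2, h3⟩ := h
  rw [h2, h3]
  exact Rel.swap p b c s h1

lemma Rel.of_ee {w v : List (Fin n × Bool)} (h : Ee w v) : Rel w v := by
  induction h with
  | refl => exact Rel.refl _
  | tail _ h2 ih => exact ih.trans (Rel.of_swap h2)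

lemma rel_push (a : Fin n × Bool) (w : List (Fin n × Bool)) : Rel (a :: w) (push a w) := by
  by_cases h : HasPair a w
  · obtain ⟨p, s, h1, h2, h3⟩ := push_of_hasPair h
    rw [h3, h1]
    have e1 : Ee (a :: (p ++ pinv a :: s)) (p ++ a :: pinv a :: s) :=
      (ee_move a p (pinv a :: s) h2).symm
    exact (Rel.of_ee e1).trans (Rel.cancel p a s)
  · obtain ⟨p, s, h1, h2, h3⟩ := push_no h
    rw [h3, h1]
    exact Rel.of_ee (ee_move a p s h2).symm

lemma rel_nf (w : List (Fin n × Bool)) : Rel w (nf w) := by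
  induction w with
  | nil => exact Rel.refl _
  | cons a t ih =>
    have h1 : Rel (a :: t) (a :: nf t) := ih.append_left [a]
    exact h1.trans (rel_push a (nf t))

/-- formal inverse of a word -/
def invW (w : List (Fin n × Bool)) : List (Fin n × Bool) := (w.map pinv).reverse

@[simp] lemma invW_append (w v : List (Fin n × Bool)) : invW (w ++ v) = invW v ++ invW w := by
  simp [invW]

@[simp] lemma invW_cons (a : Fin n × Bool) (w : List (Fin n × Bool)) :
    invW (a :: w) = invW w ++ [pinv a] := by simp [invW]

@[simp] lemma invW_nil : invW (n := n) [] = [] := rfl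

lemma rel_invW {w v : List (Fin n × Bool)} (h : Rel w v) : Rel (invW w) (invW v) := by
  induction h with
  | refl w => exact Rel.refl _
  | symm _ ih => exact ih.symm
  | trans _ _ ih1 ih2 => exact ih1.trans ih2
  | swap p b c s hc =>
    have : Rel (invW s ++ pinv c :: pinv b :: invW p) (invW s ++ pinv b :: pinv c :: invW p) :=
      Rel.swap (invW s) (pinv c) (pinv b) (invW p)
        (cm_pinv_left.mpr (cm_pinv_right.mpr (cm_symm hc)))
    simpa using this
  | cancel p a s =>
    have : Rel (invW s ++ a :: pinv a :: invW p) (invW s ++ invW p) :=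
      Rel.cancel (invW s) a (invW p)
    simpa using this

lemma Rel.inv_append (w : List (Fin n × Bool)) : Rel (invW w ++ w) [] := by
  induction w with
  | nil => exact Rel.refl _
  | cons a t ih =>
    have h1 : Rel (invW t ++ pinv a :: a :: t) (invW t ++ t) := by
      have := Rel.cancel (invW t) (pinv a) t
      simpa using this
    have h2 : Rel (invW (a :: t) ++ a :: t) (invW t ++ pinv a :: a :: t) := by
      simp only [invW_cons, List.append_assoc, List.cons_append, List.nil_append]
      exact Rel.refl _
    exact (h2.trans h1).trans ih

instance relSetoid (n : ℕ) : Setoid (List (Fin n × Bool)) :=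
  ⟨Rel, fun w => Rel.refl w, Rel.symm, Rel.trans⟩

def Q (n : ℕ) := Quotient (relSetoid n)

def Q.mk (w : List (Fin n × Bool)) : Q n := Quotient.mk (relSetoid n) w

instance : Group (Q n) where
  mul := Quotient.map₂ (· ++ ·) (fun _ _ h1 _ _ h2 => (h1.append_right _).trans (h2.append_left _))
  one := Q.mk []
  inv := Quotient.map invW (fun _ _ h => rel_invW h)
  mul_assoc := by
    intro a b c
    refine Quotient.inductionOn₃ a b c (fun w v t => ?_)
    exact congrArg (Quotient.mk _) (List.append_assoc w v t)
  one_mul := by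
    intro a
    refine Quotient.inductionOn a (fun w => ?_)
    exact congrArg (Quotient.mk _) (List.nil_append w)
  mul_one := by
    intro a
    refine Quotient.inductionOn a (fun w => ?_)
    exact congrArg (Quotient.mk _) (List.append_nil w)
  inv_mul_cancel := by
    intro a
    refine Quotient.inductionOn a (fun w => ?_)
    exact Quotient.sound (Rel.inv_append w)

lemma Q.mk_mul (w v : List (Fin n × Bool)) : Q.mk w * Q.mk v = Q.mk (w ++ v) := rfl

lemma Q.mk_inv (w : List (Fin n × Bool)) : (Q.mk w)⁻¹ = Q.mk (invW w) := rfl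

lemma Q.one_def : (1 : Q n) = Q.mk [] := rfl


/-! ### products in the Vershik group -/

def prodV (w : List (Fin n × Bool)) : Vershik n := (w.map (letterOf n)).prod

@[simp] lemma prodV_nil : prodV (n := n) [] = 1 := rfl

@[simp] lemma prodV_cons (a : Fin n × Bool) (w : List (Fin n × Bool)) :
    prodV (a :: w) = letterOf n a * prodV w := by simp [prodV]

@[simp] lemma prodV_append (w v : List (Fin n × Bool)) :
    prodV (w ++ v) = prodV w * prodV v := by simp [prodV]

lemma letterOf_pinv (a : Fin n × Bool) : letterOf n (pinv a) = (letterOf n a)⁻¹ := by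
  obtain ⟨i, b⟩ := a
  cases b <;> simp [letterOf, pinv]

open scoped commutatorElement in
lemma xGen_commute {i j : Fin n} (h : 2 ≤ |(i : ℤ) - (j : ℤ)|) :
    Commute (xGen n i) (xGen n j) := by
  rw [← commutatorElement_eq_one_iff_commute]
  have hr : (FreeGroup.of i * FreeGroup.of j * (FreeGroup.of i)⁻¹ * (FreeGroup.of j)⁻¹)
      ∈ VershikRels n := ⟨i, j, h, rfl⟩
  have : (QuotientGroup.mk (FreeGroup.of i * FreeGroup.of j * (FreeGroup.of i)⁻¹ *
      (FreeGroup.of j)⁻¹) : Vershik n) = 1 :=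
    (QuotientGroup.eq_one_iff _).2 (Subgroup.subset_normalClosure hr)
  refine Eq.trans ?_ this
  simp only [commutatorElement_def, xGen, PresentedGroup.of]
  rfl

lemma letter_commute {a b : Fin n × Bool} (h : cm a b) :
    Commute (letterOf n a) (letterOf n b) := by
  obtain ⟨i, ba⟩ := a
  obtain ⟨j, bb⟩ := b
  have hc : Commute (xGen n i) (xGen n j) := xGen_commute h
  cases ba <;> cases bb <;> simp [letterOf] <;>
    first
      | exact hc
      | exact hc.inv_left
      | exact hc.inv_right
      | exact hc.inv_left.inv_right

lemma prodV_rel {w v : List (Fin n × Bool)} (h : Rel w v) : prodV w = prodV v := by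
  induction h with
  | refl w => rfl
  | symm _ ih => exact ih.symm
  | trans _ _ ih1 ih2 => exact ih1.trans ih2
  | swap p b c s hc =>
    have := (letter_commute hc).eq
    simp only [prodV_append, prodV_cons]
    rw [← mul_assoc (letterOf n b), this, mul_assoc]
  | cancel p a s =>
    simp [letterOf_pinv]

/-! ### the homomorphism from the Vershik group to Q -/

lemma toQ_rels : ∀ r ∈ VershikRels n, (FreeGroup.lift fun i => Q.mk [(i, true)]) r = 1 := by
  rintro r ⟨i, j, hij, rfl⟩
  simp only [map_mul, map_inv, FreeGroup.lift_apply_of]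
  rw [Q.mk_inv, Q.mk_inv]
  have h1 : invW [(i, true)] = [(i, false)] := rfl
  have h2 : invW [(j, true)] = [(j, false)] := rfl
  rw [h1, h2, Q.mk_mul, Q.mk_mul, Q.mk_mul, Q.one_def]
  refine Quotient.sound ?_
  show Rel ([(i, true)] ++ [(j, true)] ++ [(i, false)] ++ [(j, false)]) []
  have s1 : Rel ([(i, true)] ++ (j, true) :: (i, false) :: [(j, false)])
      ([(i, true)] ++ (i, false) :: (j, true) :: [(j, false)]) := by
    refine Rel.swap [(i, true)] (j, true) (i, false) [(j, false)] ?_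
    show 2 ≤ |(j : ℤ) - (i : ℤ)|
    rwa [abs_sub_comm]
  have s2 : Rel ([] ++ (i, true) :: pinv (i, true) :: [(j, true), (j, false)])
      ([] ++ [(j, true), (j, false)]) := Rel.cancel [] (i, true) [(j, true), (j, false)]
  have s3 : Rel ([] ++ (j, true) :: pinv (j, true) :: []) ([] ++ []) :=
    Rel.cancel [] (j, true) []
  have e1 : ([(i, true)] ++ [(j, true)] ++ [(i, false)] ++ [(j, false)] : List (Fin n × Bool))
      = [(i, true)] ++ (j, true) :: (i, false) :: [(j, false)] := by simp
  have e2 : ([(i, true)] ++ (i, false) :: (j, true) :: [(j, false)] : List (Fin n × Bool))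
      = [] ++ (i, true) :: pinv (i, true) :: [(j, true), (j, false)] := by
    simp [pinv]
  have e3 : ([] ++ [(j, true), (j, false)] : List (Fin n × Bool))
      = [] ++ (j, true) :: pinv (j, true) :: [] := by simp [pinv]
  rw [e1]
  refine (s1.trans ?_)
  rw [e2]
  refine (s2.trans ?_)
  rw [e3]
  simpa using s3

noncomputable def toQ : Vershik n →* Q n := PresentedGroup.toGroup toQ_rels

lemma toQ_letter (a : Fin n × Bool) : toQ (letterOf n a) = Q.mk [a] := by
  obtain ⟨i, b⟩ := a
  cases b
  · show toQ ((xGen n i)⁻¹) = _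
    rw [map_inv]
    have : toQ (xGen n i) = Q.mk [(i, true)] := PresentedGroup.toGroup.of toQ_rels
    rw [this, Q.mk_inv]
    rfl
  · show toQ (xGen n i) = _
    exact PresentedGroup.toGroup.of toQ_rels

lemma toQ_prodV (w : List (Fin n × Bool)) : toQ (prodV w) = Q.mk w := by
  induction w with
  | nil => simpa [Q.one_def] using map_one (toQ (n := n))
  | cons a t ih =>
    rw [prodV_cons, map_mul, toQ_letter, ih, Q.mk_mul]
    rfl

lemma rel_of_prodV_eq {w v : List (Fin n × Bool)} (h : prodV w = prodV v) : Rel w v := by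
  have : Q.mk w = Q.mk v := by rw [← toQ_prodV, ← toQ_prodV, h]
  exact Quotient.exact this


/-! ### push preserves reducedness -/

lemma reduced_push {a : Fin n × Bool} {w : List (Fin n × Bool)} (hw : Reduced w) :
    Reduced (push a w) := by
  by_cases h : HasPair a w
  · obtain ⟨P, S, hwPS, hP, hpush⟩ := push_of_hasPair h
    rw [hpush]
    intro q x t hq hpair
    rcases append_eq_append_cons hq with ⟨q₂, hP1, ht⟩ | ⟨t₁, hq1, hS⟩
    · obtain ⟨m, r, hmr, hm⟩ := hpair
      rw [ht] at hmr
      have hxP : cm a x := hP x (by rw [hP1]; simp)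
      rcases append_eq_append_cons hmr with ⟨m₂, hq₂, hr⟩ | ⟨m₁, hm1, hS2⟩
      · exact hw q x (q₂ ++ pinv a :: S) (by rw [hwPS, hP1]; simp)
          ⟨m, m₂ ++ pinv a :: S, by rw [hq₂]; simp, hm⟩
      · refine hw q x (q₂ ++ pinv a :: S) (by rw [hwPS, hP1]; simp)
          ⟨q₂ ++ pinv a :: m₁, r, by rw [hS2]; simp, ?_⟩
        intro y hy
        rcases List.mem_append.1 hy with hy | hy
        · exact hm y (by rw [hm1]; simp [hy])
        rcases List.mem_cons.1 hy with hy | hy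
        · rw [hy]
          exact cm_pinv_right.mpr (cm_symm hxP)
        · exact hm y (by rw [hm1]; simp [hy])
    · exact hw (P ++ pinv a :: t₁) x t (by rw [hwPS, hS]; simp) hpair
  · obtain ⟨P, S, hwPS, hP, hpush⟩ := push_no h
    rw [hpush]
    intro q x t hq hpair
    rcases append_cons_eq_append_cons hq with ⟨q₂, hP1, ht⟩ | ⟨hq1, hx, ht⟩ | ⟨t₁, hq1, hS⟩
    · obtain ⟨m, r, hmr, hm⟩ := hpair
      rw [ht] at hmr
      have hxP : cm a x := hP x (by rw [hP1]; simp)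
      rcases append_cons_eq_append_cons hmr with ⟨m₂, hq₂, hr⟩ | ⟨hm1, hax, hr⟩ | ⟨m₁, hm1, hS2⟩
      · exact hw q x (q₂ ++ S) (by rw [hwPS, hP1]; simp)
          ⟨m, m₂ ++ S, by rw [hq₂]; simp, hm⟩
      · have : x = pinv a := by rw [← hax, pinv_pinv]
        rw [this] at hxP
        exact not_cm_pinv a hxP
      · refine hw q x (q₂ ++ m₁ ++ pinv x :: r) (by rw [hwPS, hP1, hS2]; simp)
          ⟨q₂ ++ m₁, r, by simp, ?_⟩
        intro y hy
        rcases List.mem_append.1 hy with hy | hy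
        · exact hm y (by rw [hm1]; simp [hy])
        · exact hm y (by rw [hm1]; simp [hy])
    · subst hx
      obtain ⟨m, r, hmr, hm⟩ := hpair
      refine h ⟨P ++ m, r, by rw [hwPS, ← ht, hmr]; simp, ?_⟩
      intro y hy
      rcases List.mem_append.1 hy with hy | hy
      · exact hP y hy
      · exact hm y hy
    · exact hw (P ++ t₁) x t (by rw [hwPS, hS]; simp) hpair

lemma reduced_foldr {t : List (Fin n × Bool)} (ht : Reduced t) (w : List (Fin n × Bool)) :
    Reduced (List.foldr push t w) := by
  induction w with
  | nil => exact ht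
  | cons a u ih => exact reduced_push ih

lemma reduced_nf (w : List (Fin n × Bool)) : Reduced (nf w) := reduced_foldr reduced_nil w


/-! ### push is compatible with shuffles -/

lemma push_swap_core (a : Fin n × Bool) :
    ∀ (p : List (Fin n × Bool)) (b c : Fin n × Bool) (s : List (Fin n × Bool)), cm b c →
      Ee (push a (p ++ b :: c :: s)) (push a (p ++ c :: b :: s)) := by
  intro p
  induction p with
  | nil =>
    intro b c s hbc
    simp only [List.nil_append]
    by_cases hb : b = pinv a <;> by_cases hc : c = pinv a
    · rw [hb, hc]
      exact Ee.refl _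
    · have hac : cm a c := cm_pinv_left.mp (hb ▸ hbc)
      simp only [push, if_pos hb, if_neg hc, if_pos hac, if_pos rfl]
      exact Ee.refl _
    · have hab : cm a b := cm_symm (cm_pinv_right.mp (hc ▸ hbc))
      simp only [push, if_pos hc, if_neg hb, if_pos hab, if_pos rfl]
      exact Ee.refl _
    · by_cases hab : cm a b <;> by_cases hac : cm a c
      · simp only [push, if_neg hb, if_neg hc, if_pos hab, if_pos hac]
        exact Ee.single ⟨[], b, c, push a s, hbc, rfl, rfl⟩
      · simp only [push, if_neg hb, if_neg hc, if_pos hab, if_neg hac]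
        refine (Ee.single (⟨[], b, a, c :: s, cm_symm hab, rfl, rfl⟩ : Swap _ _)).trans
          (Ee.single ⟨[a], b, c, s, hbc, rfl, rfl⟩)
      · simp only [push, if_neg hb, if_neg hc, if_neg hab, if_pos hac]
        refine (Ee.single (⟨[a], b, c, s, hbc, rfl, rfl⟩ : Swap _ _)).trans
          (Ee.single ⟨[], a, c, b :: s, hac, rfl, rfl⟩)
      · simp only [push, if_neg hb, if_neg hc, if_neg hab, if_neg hac]
        exact Ee.single ⟨[a], b, c, s, hbc, rfl, rfl⟩
  | cons x p ih =>
    intro b c s hbc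
    by_cases hx : x = pinv a
    · simp only [List.cons_append, push, if_pos hx]
      exact Ee.single ⟨p, b, c, s, hbc, rfl, rfl⟩
    by_cases hax : cm a x
    · simp only [List.cons_append, push, if_neg hx, if_pos hax]
      exact Ee.cons x (ih b c s hbc)
    · simp only [List.cons_append, push, if_neg hx, if_neg hax]
      exact Ee.single ⟨a :: x :: p, b, c, s, hbc, rfl, rfl⟩

lemma push_swap {a : Fin n × Bool} {s t : List (Fin n × Bool)} (h : Swap s t) :
    Ee (push a s) (push a t) := by
  obtain ⟨p, b, c, s', h1, h2, h3⟩ := h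
  rw [h2, h3]
  exact push_swap_core a p b c s' h1

lemma push_ee {a : Fin n × Bool} {s t : List (Fin n × Bool)} (h : Ee s t) :
    Ee (push a s) (push a t) := by
  induction h with
  | refl => exact Ee.refl _
  | tail _ h2 ih => exact ih.trans (push_swap h2)

lemma foldr_ee {s t : List (Fin n × Bool)} (h : Ee s t) (w : List (Fin n × Bool)) :
    Ee (List.foldr push s w) (List.foldr push t w) := by
  induction w with
  | nil => exact h
  | cons a u ih => exact push_ee ih


/-! ### the two key local confluence lemmas -/

lemma push_push_pinv {a : Fin n × Bool} {r : List (Fin n × Bool)} (hr : Reduced r) :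
    Ee (push a (push (pinv a) r)) r := by
  by_cases h : HasPair (pinv a) r
  · obtain ⟨p, s, h1, h2, h3⟩ := push_of_hasPair h
    rw [pinv_pinv] at h1
    have h2' : ∀ y ∈ p, cm a y := fun y hy => cm_pinv_left.mp (h2 y hy)
    have hnp : ¬ HasPair a (p ++ s) := by
      rintro ⟨m, u, hmu, hm⟩
      rcases append_eq_append_cons hmu with ⟨q₂, hp, hu⟩ | ⟨m₁, hm1, hs⟩
      · exact not_cm_self (pinv a) (h2 (pinv a) (by rw [hp]; simp))
      · refine hr p a (m₁ ++ pinv a :: u) (by rw [h1, hs]) ⟨m₁, u, rfl, ?_⟩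
        intro y hy
        exact hm y (by rw [hm1]; simp [hy])
    obtain ⟨P, S, e1, e2, e3⟩ := push_no hnp
    rw [h3, e3]
    refine (ee_move a P S e2).trans ?_
    rw [← e1, h1]
    exact (ee_move a p s h2').symm
  · obtain ⟨P, S, e1, e2, e3⟩ := push_no h
    have e2' : ∀ y ∈ P, cm a y := fun y hy => cm_pinv_left.mp (e2 y hy)
    rw [e3, push_cancel a P S e2', ← e1]
    exact Ee.refl _

lemma pp_both {a b : Fin n × Bool} {q p₂ s : List (Fin n × Bool)}
    (hqb : ∀ y ∈ q, cm b y) (hqa : ∀ y ∈ q ++ pinv b :: p₂, cm a y) :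
    push a (push b (q ++ pinv b :: (p₂ ++ pinv a :: s)))
      = push b (push a (q ++ pinv b :: (p₂ ++ pinv a :: s))) := by
  have hqa' : ∀ y ∈ q, cm a y := fun y hy => hqa y (by simp [hy])
  have hpa : ∀ y ∈ p₂, cm a y := fun y hy => hqa y (by simp [hy])
  have hqpa : ∀ y ∈ q ++ p₂, cm a y := by
    intro y hy
    rcases List.mem_append.1 hy with hy | hy
    · exact hqa' y hy
    · exact hpa y hy
  rw [push_cancel b q _ hqb]
  have e1 : q ++ (p₂ ++ pinv a :: s) = (q ++ p₂) ++ pinv a :: s := by simp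
  rw [e1, push_cancel a (q ++ p₂) s hqpa]
  have e2 : q ++ pinv b :: (p₂ ++ pinv a :: s) = (q ++ pinv b :: p₂) ++ pinv a :: s := by simp
  rw [e2, push_cancel a (q ++ pinv b :: p₂) s hqa]
  have e3 : (q ++ pinv b :: p₂) ++ s = q ++ pinv b :: (p₂ ++ s) := by simp
  rw [e3, push_cancel b q (p₂ ++ s) hqb]
  simp

lemma pp_mixed {a b : Fin n × Bool} {t : List (Fin n × Bool)} (hab : cm a b)
    (ha : HasPair a t) (hb : ¬ HasPair b t) :
    Ee (push a (push b t)) (push b (push a t)) := by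
  obtain ⟨p, s, h1, h2, h3⟩ := push_of_hasPair ha
  have hnb : ¬ HasPair b (p ++ s) := by
    rintro ⟨m, u, hmu, hm⟩
    rcases append_eq_append_cons hmu with ⟨q₂, hp, hu⟩ | ⟨m₁, hm1, hs⟩
    · exact hb ⟨m, q₂ ++ pinv a :: s, by rw [h1, hp]; simp, hm⟩
    · refine hb ⟨p ++ pinv a :: m₁, u, by rw [h1, hs]; simp, ?_⟩
      intro y hy
      rcases List.mem_append.1 hy with hy | hy
      · exact hm y (by rw [hm1]; simp [hy])
      rcases List.mem_cons.1 hy with hy | hy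
      · rw [hy]
        exact cm_pinv_right.mpr (cm_symm hab)
      · exact hm y (by rw [hm1]; simp [hy])
  obtain ⟨P, S, e1, e2, e3⟩ := push_no hnb
  have side1 : Ee (push b (push a t)) (b :: (p ++ s)) := by
    rw [h3, e3]
    refine (ee_move b P S e2).trans ?_
    rw [← e1]
    exact Ee.refl _
  obtain ⟨P₂, S₂, f1, f2, f3⟩ := push_no hb
  have side2 : Ee (push a (push b t)) (b :: (p ++ s)) := by
    rcases append_eq_append_cons (f1.symm.trans h1) with ⟨q₂, hP₂, hs⟩ | ⟨t₁, hp, hS₂⟩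
    · -- pinv a inside P₂
      have eq1 : push b t = p ++ pinv a :: (q₂ ++ b :: S₂) := by
        rw [f3, hP₂]; simp
      rw [eq1, push_cancel a p _ h2]
      have hy2 : ∀ y ∈ p ++ q₂, cm b y := by
        intro y hy
        refine f2 y ?_
        rw [hP₂]
        rcases List.mem_append.1 hy with hy | hy <;> simp [hy]
      have e4 : p ++ (q₂ ++ b :: S₂) = (p ++ q₂) ++ b :: S₂ := by simp
      rw [e4]
      refine (ee_move b (p ++ q₂) S₂ hy2).trans ?_
      rw [hs]
      simp [Ee.refl]
    · -- pinv a inside S₂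
      have eq1 : push b t = (P₂ ++ b :: t₁) ++ pinv a :: s := by
        rw [f3, hS₂]; simp
      have hcma : ∀ y ∈ P₂ ++ b :: t₁, cm a y := by
        intro y hy
        rcases List.mem_append.1 hy with hy | hy
        · exact h2 y (by rw [hp]; simp [hy])
        rcases List.mem_cons.1 hy with hy | hy
        · rw [hy]; exact hab
        · exact h2 y (by rw [hp]; simp [hy])
      rw [eq1, push_cancel a (P₂ ++ b :: t₁) s hcma]
      have e5 : (P₂ ++ b :: t₁) ++ s = P₂ ++ b :: (t₁ ++ s) := by simp
      rw [e5]
      refine (ee_move b P₂ (t₁ ++ s) f2).trans ?_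
      rw [hp]
      simp [Ee.refl]
  exact side2.trans side1.symm

lemma pp_half {a b : Fin n × Bool} {t : List (Fin n × Bool)} (hab : cm a b)
    (ha : ¬ HasPair a t) (hb : ¬ HasPair b t) :
    Ee (push b (push a t)) (a :: b :: t) := by
  obtain ⟨P, S, e1, e2, e3⟩ := push_no ha
  have hnb : ¬ HasPair b (P ++ a :: S) := by
    rintro ⟨m, u, hmu, hm⟩
    rcases append_cons_eq_append_cons hmu with ⟨q₂, hP, hu⟩ | ⟨hm1, hax, hu⟩ | ⟨m₁, hm1, hS⟩
    · exact hb ⟨m, q₂ ++ S, by rw [e1, hP]; simp, hm⟩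
    · exact (ne_pinv_of_cm (cm_symm hab)) hax.symm
    · refine hb ⟨P ++ m₁, u, by rw [e1, hS]; simp, ?_⟩
      intro y hy
      rcases List.mem_append.1 hy with hy | hy
      · exact hm y (by rw [hm1]; simp [hy])
      · exact hm y (by rw [hm1]; simp [hy])
  obtain ⟨P', S', g1, g2, g3⟩ := push_no hnb
  rw [e3, g3]
  refine (ee_move b P' S' g2).trans ?_
  rw [← g1]
  refine (Ee.cons b ((ee_move a P S e2).trans ?_)).trans
    (Ee.single ⟨[], b, a, t, cm_symm hab, rfl, rfl⟩)
  rw [← e1]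
  exact Ee.refl _

lemma push_push_comm {a b : Fin n × Bool} {t : List (Fin n × Bool)} (hab : cm a b) :
    Ee (push a (push b t)) (push b (push a t)) := by
  by_cases ha : HasPair a t <;> by_cases hb : HasPair b t
  · obtain ⟨p, s, h1, h2⟩ := ha
    obtain ⟨q, r, g1, g2⟩ := hb
    rcases append_cons_eq_append_cons (h1.symm.trans g1) with ⟨q₂, hp, hr⟩ | ⟨hq, hx, hr⟩ |
      ⟨t₁, hq, hs⟩
    · -- pinv b before pinv a
      have ht : t = q ++ pinv b :: (q₂ ++ pinv a :: s) := by rw [h1, hp]; simp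
      have hqa : ∀ y ∈ q ++ pinv b :: q₂, cm a y := by
        intro y hy
        exact h2 y (by rw [hp]; simpa using hy)
      rw [ht, pp_both g2 hqa]
      exact Ee.refl _
    · exact absurd (pinv_inj hx) (fun he => not_cm_self a (he ▸ hab))
    · -- pinv a before pinv b
      have ht : t = p ++ pinv a :: (t₁ ++ pinv b :: r) := by rw [h1, hs]
      have hqb : ∀ y ∈ p ++ pinv a :: t₁, cm b y := by
        intro y hy
        exact g2 y (by rw [hq]; simpa using hy)
      rw [ht, pp_both h2 hqb]
      exact Ee.refl _
  · exact pp_mixed hab ha hb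
  · exact (pp_mixed (cm_symm hab) hb ha).symm
  · refine ((pp_half (cm_symm hab) hb ha).trans ?_).trans (pp_half hab ha hb).symm
    exact Ee.single ⟨[], b, a, t, cm_symm hab, rfl, rfl⟩


/-! ### global invariance of the normal form length -/

lemma foldr_rel {w v : List (Fin n × Bool)} (h : Rel w v) :
    ∀ t, Reduced t → Ee (List.foldr push t w) (List.foldr push t v) := by
  induction h with
  | refl w => intro t _; exact Ee.refl _
  | symm _ ih => intro t ht; exact (ih t ht).symm
  | trans _ _ ih1 ih2 => intro t ht; exact (ih1 t ht).trans (ih2 t ht)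
  | swap p b c s hc =>
    intro t ht
    rw [List.foldr_append, List.foldr_append]
    simp only [List.foldr_cons]
    exact foldr_ee (push_push_comm hc) p
  | cancel p a s =>
    intro t ht
    rw [List.foldr_append, List.foldr_append]
    simp only [List.foldr_cons]
    exact foldr_ee (push_push_pinv (reduced_foldr ht s)) p

lemma nf_ee_of_rel {w v : List (Fin n × Bool)} (h : Rel w v) : Ee (nf w) (nf v) :=
  foldr_rel h [] reduced_nil

lemma nf_length_eq_of_prod {w v : List (Fin n × Bool)} (h : prodV w = prodV v) :
    (nf w).length = (nf v).length :=
  (nf_ee_of_rel (rel_of_prodV_eq h)).length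

lemma nf_ee_self {w : List (Fin n × Bool)} (hw : Reduced w) : Ee (nf w) w := by
  induction w with
  | nil => exact Ee.refl _
  | cons a w' ih =>
    have hw' : Reduced w' := reduced_cons hw
    have ihe : Ee (nf w') w' := ih hw'
    by_cases h : HasPair a (nf w')
    · exact absurd (hasPair_ee ihe h) (hw [] a w' rfl)
    · obtain ⟨P, S, e1, e2, e3⟩ := push_no h
      show Ee (push a (nf w')) (a :: w')
      rw [e3]
      refine (ee_move a P S e2).trans ?_
      rw [← e1]
      exact Ee.cons a ihe

/-! ### characterization of vLength -/

lemma exists_word : ∀ (L : List (Vershik n)), (∀ g ∈ L, IsLetter n g) →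
    ∃ w₂ : List (Fin n × Bool), w₂.map (letterOf n) = L := by
  intro L
  induction L with
  | nil => intro _; exact ⟨[], rfl⟩
  | cons g L ih =>
    intro h
    obtain ⟨w₂, hw₂⟩ := ih (fun g' hg' => h g' (by simp [hg']))
    obtain ⟨i, hi | hi⟩ := h g (by simp)
    · exact ⟨(i, true) :: w₂, by simp [letterOf, hw₂, hi]⟩
    · exact ⟨(i, false) :: w₂, by simp [letterOf, hw₂, hi]⟩

lemma vLength_eq_nf (w : List (Fin n × Bool)) : vLength (prodV w) = (nf w).length := by
  have hmem : (nf w).length ∈ {k | ∃ L : List (Vershik n), L.length = k ∧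
      (∀ g ∈ L, IsLetter n g) ∧ L.prod = prodV w} := by
    refine ⟨(nf w).map (letterOf n), by simp, ?_, ?_⟩
    · intro g hg
      obtain ⟨p, _, rfl⟩ := List.mem_map.1 hg
      obtain ⟨i, b⟩ := p
      cases b
      · exact ⟨i, Or.inr (by simp [letterOf])⟩
      · exact ⟨i, Or.inl (by simp [letterOf])⟩
    · exact prodV_rel (rel_nf w).symm
  have h1 : vLength (prodV w) ≤ (nf w).length := Nat.sInf_le hmem
  have h2 : (nf w).length ≤ vLength (prodV w) := by
    obtain ⟨L, hL1, hL2, hL3⟩ := Nat.sInf_mem (⟨_, hmem⟩ : Set.Nonempty _)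
    obtain ⟨w₂, hw₂⟩ := exists_word L hL2
    have hp : prodV w₂ = prodV w := by
      rw [prodV, hw₂, hL3]
    have := nf_length_eq_of_prod hp
    have hle : (nf w₂).length ≤ w₂.length := nf_length_le w₂
    have hlw : w₂.length = L.length := by rw [← hw₂, List.length_map]
    rw [← this]
    rw [vLength]
    omega
  omega

/-! ### the reduction process -/

lemma main_aux : ∀ (N : ℕ) (w : List (Fin n × Bool)), w.length ≤ N →
    ∃ w', w'.Sublist w ∧ prodV w' = prodV w ∧ w'.length = (nf w).length := by
  intro N
  induction N with
  | zero =>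
    intro w hw
    have : w = [] := List.eq_nil_of_length_eq_zero (Nat.le_zero.mp hw)
    subst this
    exact ⟨[], List.Sublist.refl _, rfl, by simp [nf]⟩
  | succ N ih =>
    intro w hw
    by_cases heq : w.length = (nf w).length
    · exact ⟨w, List.Sublist.refl _, rfl, heq⟩
    · have hnred : ¬ Reduced w := fun hr => heq ((nf_ee_self hr).length).symm
      unfold Reduced at hnred
      push_neg at hnred
      obtain ⟨p, x, s, hsplit, hpair⟩ := hnred
      obtain ⟨m, r, hmr, hm⟩ := hpair
      have hweq : w = p ++ x :: (m ++ pinv x :: r) := by rw [hsplit, hmr]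
      have hsub : (p ++ (m ++ r)).Sublist w := by
        rw [hweq]
        refine List.Sublist.append_left ?_ p
        refine List.Sublist.cons x ?_
        exact List.Sublist.append_left (List.sublist_cons_self (pinv x) r) m
      have hrel : Rel w (p ++ (m ++ r)) := by
        have e1 : Ee (x :: (m ++ pinv x :: r)) (m ++ x :: pinv x :: r) :=
          (ee_move x m (pinv x :: r) hm).symm
        have e2 : Ee w (p ++ (m ++ x :: pinv x :: r)) := by
          rw [hweq]
          exact Ee.append_left p e1
        have e3 : Rel ((p ++ m) ++ x :: pinv x :: r) ((p ++ m) ++ r) := Rel.cancel (p ++ m) x r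
        refine (Rel.of_ee e2).trans ?_
        have e4 : p ++ (m ++ x :: pinv x :: r) = (p ++ m) ++ x :: pinv x :: r := by simp
        have e5 : (p ++ m) ++ r = p ++ (m ++ r) := by simp
        rw [e4, ← e5]
        exact e3
      have hlen : (p ++ (m ++ r)).length + 2 = w.length := by
        rw [hweq]
        simp
        omega
      obtain ⟨w'', h1, h2, h3⟩ := ih (p ++ (m ++ r)) (by omega)
      refine ⟨w'', h1.trans hsub, h2.trans (prodV_rel hrel).symm, ?_⟩
      rw [h3, ← (nf_ee_of_rel hrel).length]

end VPR

/-- Pseudo-reduction preserves length: any word `w` in the generators of `V_n` and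
their inverses has a subword (a sublist, preserving the order of the remaining
letters) representing the same element `u` of `V_n` and consisting of exactly
`l(u)` letters. -/
theorem vershik_pseudo_reduction (n : ℕ) (w : List (Fin n × Bool)) (u : Vershik n)
    (hu : (w.map (letterOf n)).prod = u) :
    ∃ w' : List (Fin n × Bool), w'.Sublist w ∧
      (w'.map (letterOf n)).prod = u ∧ w'.length = vLength u := by
  obtain ⟨w', hsub, hprod, hlen⟩ := VPR.main_aux w.length w le_rfl
  refine ⟨w', hsub, ?_, ?_⟩
  · rw [← hu]
    exact hprod
  · rw [hlen, ← hu]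
    exact (VPR.vLength_eq_nf w).symm
end
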